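/- arXiv:2411.10299 — 3 statements merged into one kernel-verified Lean document; each statement's English description precedes it below -/
import Mathlib

section
/- Let q be an odd prime power and let G ≅ PGL(2,q) be the stabilizer of a non-degenerate conic O in PG(2,q). The map sending an involution of G to its center is a bijection between the set of involutions of G and the set of points of PG(2,q) not on O. -/
open Projectivization

variable {F : Type} [Field F]

/-- The projective plane `PG(2,q)` over `F`. -/
abbrev Pt (F : Type) [Field F] := Projectivization F (Fin 3 → F)

/-- A permutation of the plane is a projectivity if it is induced by a linear automorphism. -/
def IsProjy (φ : Equiv.Perm (Pt F)) : Prop :=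
  ∃ g : (Fin 3 → F) ≃ₗ[F] (Fin 3 → F),
    ∀ x : Pt F, φ x = Projectivization.map (g : (Fin 3 → F) →ₗ[F] (Fin 3 → F)) g.injective x

/-- Lines of the projective plane: zero sets of nonzero linear forms. -/
def IsLine (L : Set (Pt F)) : Prop :=
  ∃ f : (Fin 3 → F) →ₗ[F] F, f ≠ 0 ∧ L = {x : Pt F | f x.rep = 0}

lemma map_map (g h : (Fin 3 → F) ≃ₗ[F] (Fin 3 → F)) (x : Pt F) :
    Projectivization.map ((h.trans g) : (Fin 3 → F) →ₗ[F] (Fin 3 → F)) (h.trans g).injective x =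
      Projectivization.map (g : (Fin 3 → F) →ₗ[F] (Fin 3 → F)) g.injective
        (Projectivization.map (h : (Fin 3 → F) →ₗ[F] (Fin 3 → F)) h.injective x) := by
  induction x using Projectivization.ind with
  | h v hv => rfl

/-- The subgroup of `Perm (PG(2,q))` of projectivities stabilizing a set `O` (the conic). -/
def ConicStab (O : Set (Pt F)) : Subgroup (Equiv.Perm (Pt F)) where
  carrier := {φ | IsProjy φ ∧ ∀ x, φ x ∈ O ↔ x ∈ O}
  one_mem' := by
    refine ⟨⟨LinearEquiv.refl F _, fun x => ?_⟩, fun x => Iff.rfl⟩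
    have : ((LinearEquiv.refl F (Fin 3 → F)) : (Fin 3 → F) →ₗ[F] (Fin 3 → F)) = LinearMap.id := rfl
    simp only [this, Projectivization.map_id]
    rfl
  mul_mem' := by
    rintro a b ⟨⟨g, hg⟩, ha⟩ ⟨⟨h, hh⟩, hb⟩
    refine ⟨⟨h.trans g, fun x => ?_⟩, fun x => (ha _).trans (hb x)⟩
    rw [map_map]
    simp [Equiv.Perm.mul_apply, hg, hh]
  inv_mem' := by
    rintro a ⟨⟨g, hg⟩, ha⟩
    constructor
    · refine ⟨g.symm, fun x => ?_⟩
      have key : a (Projectivization.map (g.symm : (Fin 3 → F) →ₗ[F] (Fin 3 → F))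
          g.symm.injective x) = x := by
        rw [hg]
        induction x using Projectivization.ind with
        | h v hv =>
          rw [Projectivization.map_mk, Projectivization.map_mk]
          exact (Projectivization.mk_eq_mk_iff F _ _ _ hv).2 ⟨1, by simp⟩
      calc a⁻¹ x = a⁻¹ (a (Projectivization.map _ g.symm.injective x)) := by rw [key]
        _ = _ := by simp
    · intro x
      have := ha (a⁻¹ x)
      simpa using this.symm

/-- The subgroup of permutations stabilizing a set. -/
def SetStab (S : Set (Pt F)) : Subgroup (Equiv.Perm (Pt F)) where
  carrier := {φ | ∀ x, φ x ∈ S ↔ x ∈ S}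
  one_mem' := fun _ => Iff.rfl
  mul_mem' := fun ha hb x => (ha _).trans (hb x)
  inv_mem' := by
    intro a ha x
    have := ha (a⁻¹ x)
    simpa using this.symm

/-- `C` is a center of the perspectivity `φ`: every line through `C` is stabilized. -/
def IsCenterOf (φ : Equiv.Perm (Pt F)) (C : Pt F) : Prop :=
  ∀ L : Set (Pt F), IsLine L → C ∈ L → ∀ y, φ y ∈ L ↔ y ∈ L

/-- `φ` is a perspectivity: it has a center and an axis (a line fixed pointwise). -/
def IsPerspectivity (φ : Equiv.Perm (Pt F)) : Prop :=
  ∃ (C : Pt F) (l : Set (Pt F)), IsLine l ∧ IsCenterOf φ C ∧ ∀ x ∈ l, φ x = x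

/-- `φ` is the involution of the stabilizer of `O` with center `P`. -/
def IsInvolWithCenter (O : Set (Pt F)) (φ : Equiv.Perm (Pt F)) (P : Pt F) : Prop :=
  φ ∈ ConicStab O ∧ φ ^ 2 = 1 ∧ φ ≠ 1 ∧ IsCenterOf φ P


abbrev V3 (F : Type) [Field F] := Fin 3 → F

lemma two_ne_zero_of_odd_card [Fintype F] (hodd : Odd (Fintype.card F)) : (2 : F) ≠ 0 := by
  intro h2
  have hdvd : ringChar F ∣ 2 := (CharP.cast_eq_zero_iff F (ringChar F) 2).mp (by exact_mod_cast h2)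
  have hchar : ringChar F = 2 := by
    rcases (Nat.dvd_prime Nat.prime_two).1 hdvd with h | h
    · exact absurd h CharP.ringChar_ne_one
    · exact h
  have h1 := FiniteField.even_card_of_char_two hchar
  have h2' := Nat.odd_iff.mp hodd
  omega

-- scalar lemma
lemma eq_smul_id_of_proj_trivial (e : V3 F →ₗ[F] V3 F)
    (h : ∀ v : V3 F, v ≠ 0 → ∃ a : F, e v = a • v) :
    ∃ a : F, ∀ v, e v = a • v := by
  classical
  set v₀ : V3 F := fun _ => 1 with hv₀def
  have hv₀ : v₀ ≠ 0 := by
    intro h; have := congrFun h 0; simp [hv₀def] at this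
  obtain ⟨a₀, ha₀⟩ := h v₀ hv₀
  refine ⟨a₀, fun v => ?_⟩
  rcases eq_or_ne v 0 with rfl | hv
  · simp
  by_cases hsp : v ∈ Submodule.span F {v₀}
  · obtain ⟨c, rfl⟩ := Submodule.mem_span_singleton.1 hsp
    rw [map_smul, ha₀, smul_comm]
  · have hvv₀ : v + v₀ ≠ 0 := by
      intro h
      apply hsp
      have : v = -v₀ := by linear_combination (norm := module) h
      rw [this]
      exact Submodule.mem_span_singleton.2 ⟨-1, by simp⟩
    obtain ⟨a, ha⟩ := h v hv
    obtain ⟨a', ha'⟩ := h (v + v₀) hvv₀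
    rw [map_add, ha, ha₀, smul_add] at ha'
    have key : (a - a') • v = (a' - a₀) • v₀ := by
      linear_combination (norm := module) ha'
    have haa' : a = a' := by
      by_contra hne
      apply hsp
      have : v = ((a - a')⁻¹ * (a' - a₀)) • v₀ := by
        rw [mul_smul, ← key, smul_smul, inv_mul_cancel₀ (sub_ne_zero.2 hne), one_smul]
      exact this ▸ Submodule.mem_span_singleton.2 ⟨_, rfl⟩
    have h0 : (a' - a₀) • v₀ = 0 := by rw [haa'] at key; simpa using key.symm
    rcases smul_eq_zero.1 h0 with h | h
    · rw [ha, haa', sub_eq_zero.1 h]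
    · exact absurd h hv₀

open QuadraticMap in
/-- The linear functional `v ↦ polar Q p v`. -/
def polarFun (Q : QuadraticForm F (V3 F)) (p : V3 F) : V3 F →ₗ[F] F where
  toFun v := polar Q p v
  map_add' := polar_add_right Q p
  map_smul' a v := by simpa using polar_smul_right Q a p v

open QuadraticMap in
/-- Reflection in `p` (identity if `Q p = 0`). -/
def reflMap (Q : QuadraticForm F (V3 F)) (p : V3 F) : V3 F →ₗ[F] V3 F :=
  LinearMap.id - ((Q p)⁻¹ • polarFun Q p).smulRight p

open QuadraticMap

lemma reflMap_apply (Q : QuadraticForm F (V3 F)) (p v : V3 F) :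
    reflMap Q p v = v - ((Q p)⁻¹ * polar Q p v) • p := by
  simp [reflMap, polarFun, smul_smul]

lemma polar_self' (Q : QuadraticForm F (V3 F)) (x : V3 F) : polar Q x x = 2 * Q x := by
  simpa using polar_self Q x

lemma Q_smul (Q : QuadraticForm F (V3 F)) (a : F) (x : V3 F) : Q (a • x) = a * a * Q x := by
  simpa [mul_assoc] using QuadraticMap.map_smul Q a x

lemma Q_add (Q : QuadraticForm F (V3 F)) (x y : V3 F) :
    Q (x + y) = Q x + Q y + polar Q x y := by
  rw [polar]; ring

lemma reflMap_self (Q : QuadraticForm F (V3 F)) (p : V3 F) (hp : Q p ≠ 0) :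
    reflMap Q p p = -p := by
  rw [reflMap_apply, polar_self']
  have h : (Q p)⁻¹ * (2 * Q p) = 2 := by field_simp
  rw [h]; module

lemma reflMap_perp (Q : QuadraticForm F (V3 F)) (p w : V3 F) (hw : polar Q p w = 0) :
    reflMap Q p w = w := by
  rw [reflMap_apply, hw]; simp

lemma polar_reflMap (Q : QuadraticForm F (V3 F)) (p v : V3 F) (hp : Q p ≠ 0) :
    polar Q p (reflMap Q p v) = - polar Q p v := by
  rw [reflMap_apply, polar_sub_right, polar_smul_right, polar_self']
  simp only [smul_eq_mul]
  field_simp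
  ring

lemma reflMap_reflMap (Q : QuadraticForm F (V3 F)) (p v : V3 F) :
    reflMap Q p (reflMap Q p v) = v := by
  rcases eq_or_ne (Q p) 0 with hp | hp
  · simp [reflMap_apply, hp]
  · rw [reflMap_apply Q p (reflMap Q p v), polar_reflMap Q p v hp, reflMap_apply]
    module

lemma Q_reflMap (Q : QuadraticForm F (V3 F)) (p v : V3 F) :
    Q (reflMap Q p v) = Q v := by
  rcases eq_or_ne (Q p) 0 with hp | hp
  · simp [reflMap_apply, hp]
  · rw [reflMap_apply, sub_eq_add_neg, Q_add, ← neg_smul, Q_smul, polar_smul_right,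
      polar_comm]
    simp only [smul_eq_mul, polar_comm (⇑Q) v p]
    field_simp
    ring

lemma reflMap_ne_zero (Q : QuadraticForm F (V3 F)) (p : V3 F) {v : V3 F} (hv : v ≠ 0) :
    reflMap Q p v ≠ 0 := by
  intro h
  have := congrArg (reflMap Q p) h
  rw [reflMap_reflMap] at this
  simp at this
  exact hv this

lemma reflMap_smul_base (Q : QuadraticForm F (V3 F)) (p : V3 F) (hp : Q p ≠ 0) (a : F)
    (ha : a ≠ 0) (v : V3 F) : reflMap Q (a • p) v = reflMap Q p v := by
  rw [reflMap_apply, reflMap_apply, Q_smul, polar_smul_left, smul_smul]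
  congr 2
  field_simp
  ring

abbrev Pt' (F : Type) [Field F] := Projectivization F (Fin 3 → F)

lemma exists_unit_smul_rep (v : V3 F) (hv : v ≠ 0) :
    ∃ a : Fˣ, (a : F) • v = (Projectivization.mk F v hv).rep :=
  (Projectivization.mk_eq_mk_iff F _ _ (Projectivization.rep_nonzero _) hv).1
    (Projectivization.mk_rep _)

lemma Q_rep_mk (Q : QuadraticForm F (V3 F)) (v : V3 F) (hv : v ≠ 0) :
    Q ((Projectivization.mk F v hv).rep) = 0 ↔ Q v = 0 := by
  obtain ⟨a, ha⟩ := exists_unit_smul_rep v hv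
  rw [← ha, Q_smul]
  simp [a.ne_zero]

lemma f_rep_mk (f : V3 F →ₗ[F] F) (v : V3 F) (hv : v ≠ 0) :
    f ((Projectivization.mk F v hv).rep) = 0 ↔ f v = 0 := by
  obtain ⟨a, ha⟩ := exists_unit_smul_rep v hv
  rw [← ha, _root_.map_smul]
  simp [a.ne_zero]

lemma mk_linearMap_rep (g : V3 F →ₗ[F] V3 F) (hg : ∀ v : V3 F, v ≠ 0 → g v ≠ 0)
    (v : V3 F) (hv : v ≠ 0) :
    Projectivization.mk F (g ((Projectivization.mk F v hv).rep))
        (hg _ (Projectivization.rep_nonzero _)) =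
      Projectivization.mk F (g v) (hg v hv) := by
  obtain ⟨a, ha⟩ := exists_unit_smul_rep v hv
  rw [Projectivization.mk_eq_mk_iff]
  exact ⟨a, by rw [← ha, _root_.map_smul]; rfl⟩

/-- The projective reflection as a permutation. -/
noncomputable def reflPerm (Q : QuadraticForm F (V3 F)) (p : V3 F) : Equiv.Perm (Pt' F) where
  toFun x := Projectivization.mk F (reflMap Q p x.rep) (reflMap_ne_zero Q p x.rep_nonzero)
  invFun x := Projectivization.mk F (reflMap Q p x.rep) (reflMap_ne_zero Q p x.rep_nonzero)
  left_inv x := by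
    dsimp only
    rw [mk_linearMap_rep (reflMap Q p) (fun v hv => reflMap_ne_zero Q p hv) _
      (reflMap_ne_zero Q p x.rep_nonzero)]
    conv_rhs => rw [← Projectivization.mk_rep x]
    rw [Projectivization.mk_eq_mk_iff]
    exact ⟨1, by simp [reflMap_reflMap]⟩
  right_inv x := by
    dsimp only
    rw [mk_linearMap_rep (reflMap Q p) (fun v hv => reflMap_ne_zero Q p hv) _
      (reflMap_ne_zero Q p x.rep_nonzero)]
    conv_rhs => rw [← Projectivization.mk_rep x]
    rw [Projectivization.mk_eq_mk_iff]
    exact ⟨1, by simp [reflMap_reflMap]⟩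

lemma reflPerm_mk (Q : QuadraticForm F (V3 F)) (p : V3 F) (v : V3 F) (hv : v ≠ 0) :
    reflPerm Q p (Projectivization.mk F v hv) =
      Projectivization.mk F (reflMap Q p v) (reflMap_ne_zero Q p hv) := by
  exact mk_linearMap_rep (reflMap Q p) (fun v hv => reflMap_ne_zero Q p hv) v hv

lemma reflPerm_sq (Q : QuadraticForm F (V3 F)) (p : V3 F) : (reflPerm Q p) ^ 2 = 1 := by
  ext x
  rw [pow_two]
  show (reflPerm Q p) ((reflPerm Q p) x) = x
  exact (reflPerm Q p).left_inv x

/-- The reflection as a linear equivalence. -/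
def reflEquiv (Q : QuadraticForm F (V3 F)) (p : V3 F) : V3 F ≃ₗ[F] V3 F :=
  LinearEquiv.ofLinear (reflMap Q p) (reflMap Q p)
    (LinearMap.ext (reflMap_reflMap Q p)) (LinearMap.ext (reflMap_reflMap Q p))

-- finrank helpers
lemma two_le_finrank_ker (f : V3 F →ₗ[F] F) : 2 ≤ Module.finrank F (LinearMap.ker f) := by
  have h := LinearMap.finrank_range_add_finrank_ker f
  have h2 : Module.finrank F (LinearMap.range f) ≤ 1 := by
    simpa using Submodule.finrank_le (LinearMap.range f)
  rw [Module.finrank_fin_fun] at h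
  omega

lemma exists_ne_zero_inf (S T : Submodule F (V3 F))
    (h : 4 ≤ Module.finrank F S + Module.finrank F T) :
    ∃ v : V3 F, v ≠ 0 ∧ v ∈ S ∧ v ∈ T := by
  have hsum := Submodule.finrank_sup_add_finrank_inf_eq S T
  have hsup : Module.finrank F (S ⊔ T : Submodule F (V3 F)) ≤ 3 := by
    have := Submodule.finrank_le (S ⊔ T : Submodule F (V3 F))
    rwa [Module.finrank_fin_fun] at this
  have hinf : Module.finrank F (S ⊓ T : Submodule F (V3 F)) ≠ 0 := by omega
  have : (S ⊓ T : Submodule F (V3 F)) ≠ ⊥ := fun hbot => hinf (by rw [hbot]; simp)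
  obtain ⟨v, hvmem, hvne⟩ := Submodule.exists_mem_ne_zero_of_ne_bot this
  exact ⟨v, hvne, hvmem.1, hvmem.2⟩


lemma ne_zero_of_Q_ne_zero {Q : QuadraticForm F (V3 F)} {p : V3 F} (hp : Q p ≠ 0) : p ≠ 0 :=
  fun h => hp (by rw [h]; exact QuadraticMap.map_zero Q)

lemma reflPerm_ne_one (Q : QuadraticForm F (V3 F)) (p : V3 F) (hp : Q p ≠ 0)
    (h2 : (2 : F) ≠ 0) : reflPerm Q p ≠ 1 := by
  intro h1
  have hp0 : p ≠ 0 := ne_zero_of_Q_ne_zero hp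
  -- get w ≠ 0 with polar Q p w = 0
  obtain ⟨w, hw0, hwker⟩ : ∃ w : V3 F, w ≠ 0 ∧ polar Q p w = 0 := by
    have h2le := two_le_finrank_ker (polarFun Q p)
    have hne : (LinearMap.ker (polarFun Q p)) ≠ ⊥ := by
      intro hbot
      rw [hbot] at h2le
      simp at h2le
    obtain ⟨w, hwmem, hwne⟩ := Submodule.exists_mem_ne_zero_of_ne_bot hne
    exact ⟨w, hwne, hwmem⟩
  -- w not a multiple of p
  have hwp : ∀ c : F, w ≠ c • p := by
    intro c hc
    rcases eq_or_ne c 0 with rfl | hc0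
    · simp at hc; exact hw0 hc
    · rw [hc, polar_smul_right, smul_eq_mul, polar_self'] at hwker
      rcases mul_eq_zero.1 hwker with h | h
      · exact hc0 h
      · rcases mul_eq_zero.1 h with h | h
        · exact h2 h
        · exact hp h
  have hpw : p + w ≠ 0 := by
    intro h
    exact hwp (-1) (by linear_combination (norm := module) h)
  have := congrFun (congrArg (fun e => e.toFun) h1) (Projectivization.mk F (p + w) hpw)
  simp only [Equiv.toFun_as_coe, Equiv.Perm.coe_one, id_eq] at this
  rw [reflPerm_mk] at this
  have hrefl : reflMap Q p (p + w) = -p + w := by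
    rw [map_add, reflMap_self Q p hp, reflMap_perp Q p w hwker]
  rw [Projectivization.mk_eq_mk_iff] at this
  · obtain ⟨a, ha⟩ := this
    rw [hrefl, Units.smul_def] at ha
    -- (a : F) • (p + w) = -p + w
    have ha' : ((a : F) + 1) • p = (1 - (a : F)) • w := by
      linear_combination (norm := module) ha
    rcases eq_or_ne ((a : F)) 1 with h1' | h1'
    · rw [h1'] at ha'
      simp at ha'
      rcases ha' with h | h
      · exact h2 (by linear_combination h)
      · exact hp0 h
    · have : w = ((1 - (a : F))⁻¹ * ((a : F) + 1)) • p := by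
        rw [mul_smul, ha', smul_smul, inv_mul_cancel₀ (sub_ne_zero.2 (Ne.symm h1')), one_smul]
      exact hwp _ this


lemma Q_expand (Q : QuadraticForm F (V3 F)) (α : F) (p w : V3 F) :
    Q (α • p + w) = α * α * Q p + α * polar Q p w + Q w := by
  rw [Q_add, Q_smul, polar_smul_left]
  simp only [smul_eq_mul]
  ring

lemma core (Q : QuadraticForm F (V3 F))
    (hQ : ∀ v : Fin 3 → F, (∀ w, QuadraticMap.polar Q v w = 0) → v = 0)
    (h2 : (2 : F) ≠ 0) [Fintype F] (hcard : Fintype.card F % 2 = 1)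
    (h : V3 F →ₗ[F] V3 F) (hinv : ∀ v, h (h v) = v)
    (hstab : ∀ v, Q (h v) = 0 ↔ Q v = 0)
    (p : V3 F) (hp0 : p ≠ 0) (hpm : h p = -p)
    (hker : ∀ z, h z = -z → ∃ c : F, z = c • p)
    (hE2 : Module.finrank F (LinearMap.ker (h - LinearMap.id)) = 2) :
    Q p ≠ 0 ∧ ∀ v, h v = reflMap Q p v := by
  set E : Submodule F (V3 F) := LinearMap.ker (h - LinearMap.id) with hEdef
  have hmemE : ∀ w, w ∈ E ↔ h w = w := by
    intro w
    rw [hEdef, LinearMap.mem_ker, LinearMap.sub_apply, LinearMap.id_apply, sub_eq_zero]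
  -- decomposition
  have hdecomp : ∀ v : V3 F, ∃ (α : F) (w : V3 F), w ∈ E ∧ v = α • p + w := by
    intro v
    have hsub : h (v - h v) = -(v - h v) := by
      rw [LinearMap.map_sub, hinv]; abel
    have hminus : h ((2:F)⁻¹ • (v - h v)) = -((2:F)⁻¹ • (v - h v)) := by
      rw [_root_.map_smul, hsub, smul_neg]
    obtain ⟨c, hc⟩ := hker _ hminus
    have hadd : h (v + h v) = v + h v := by
      rw [LinearMap.map_add, hinv]; abel
    refine ⟨c, (2:F)⁻¹ • (v + h v), ?_, ?_⟩
    · rw [hmemE, _root_.map_smul, hadd]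
    · rw [← hc]
      have hhalf : (2:F)⁻¹ + (2:F)⁻¹ = 1 := by
        rw [← two_mul, mul_inv_cancel₀ h2]
      rw [smul_sub, smul_add]
      have hv2 : ((2:F)⁻¹ + (2:F)⁻¹) • v = v := by rw [hhalf, one_smul]
      rw [add_smul] at hv2
      calc v = ((2:F)⁻¹ • v - (2:F)⁻¹ • h v) + ((2:F)⁻¹ • v + (2:F)⁻¹ • h v) := by
              rw [sub_add_add_cancel, hv2]
        _ = _ := by rfl
  -- the key "star" property
  have hstar : ∀ (α : F) (w : V3 F), w ∈ E → Q (α • p + w) = 0 → α * polar Q p w = 0 := by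
    intro α w hw hQ0
    have himg : h (α • p + w) = (-α) • p + w := by
      rw [map_add, _root_.map_smul, hpm, (hmemE w).1 hw, smul_neg, neg_smul]
    have hQ0' : Q ((-α) • p + w) = 0 := by
      rw [← himg, hstab]
      exact hQ0
    rw [Q_expand] at hQ0 hQ0'
    have : 2 * (α * polar Q p w) = 0 := by linear_combination hQ0 - hQ0'
    rcases mul_eq_zero.1 this with hc | hc
    · exact absurd hc h2
    · exact hc
  -- existence of u ∈ E with polar Q p u = 0
  obtain ⟨u, hu0, huE, huL⟩ : ∃ u : V3 F, u ≠ 0 ∧ u ∈ E ∧ polar Q p u = 0 := by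
    obtain ⟨u, hu0, h1, h3⟩ := exists_ne_zero_inf E (LinearMap.ker (polarFun Q p)) (by
      have := two_le_finrank_ker (polarFun Q p)
      omega)
    exact ⟨u, hu0, h1, h3⟩
  -- Goal 1 : Q p ≠ 0
  have hQp : Q p ≠ 0 := by
    intro hQp0
    by_cases hex : ∃ w ∈ E, polar Q p w ≠ 0
    · obtain ⟨w, hwE, hwL⟩ := hex
      have claim1 : ∀ w' ∈ E, polar Q p w' ≠ 0 → Q w' = 0 := by
        intro w' hw'E hw'L
        set α : F := -(Q w') / (polar Q p w') with hα
        have hQv : Q (α • p + w') = 0 := by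
          rw [Q_expand, hQp0, hα]
          field_simp
          ring
        have := hstar α w' hw'E hQv
        rw [hα] at this
        field_simp at this
        exact neg_eq_zero.1 this
      have claim2 : ∀ z ∈ E, polar Q p z = 0 → Q z = 0 ∧ polar Q w z = 0 := by
        intro z hzE hzL
        have hsum : Q (w + z) = 0 := claim1 _ (add_mem hwE hzE)
          (by rw [polar_add_right, hzL, add_zero]; exact hwL)
        have hdiff : Q (w - z) = 0 := claim1 _ (sub_mem hwE hzE)
          (by rw [polar_sub_right, hzL, sub_zero]; exact hwL)
        have hw0 : Q w = 0 := claim1 w hwE hwL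
        rw [Q_add] at hsum
        have : Q (w - z) = Q w + Q z - polar Q w z := by
          rw [sub_eq_add_neg, Q_add, polar_neg_right]
          have : Q (-z) = Q z := by
            rw [← neg_one_smul F z, Q_smul]; ring
          rw [this]; ring
        rw [this] at hdiff
        constructor
        · have : 2 * Q z = 0 := by linear_combination hsum + hdiff - 2 * hw0
          rcases mul_eq_zero.1 this with hc | hc
          · exact absurd hc h2
          · exact hc
        · have hQz : Q z = 0 := by
            have : 2 * Q z = 0 := by linear_combination hsum + hdiff - 2 * hw0
            rcases mul_eq_zero.1 this with hc | hc
            · exact absurd hc h2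
            · exact hc
          linear_combination hsum - hw0 - hQz
      -- now show polar Q u v = 0 for all v
      have hu : ∀ v, polar Q u v = 0 := by
        intro v
        obtain ⟨α, w', hw'E, rfl⟩ := hdecomp v
        have hup : polar Q u p = 0 := by rw [polar_comm]; exact huL
        set z : V3 F := w' - ((polar Q p w') / (polar Q p w)) • w with hz
        have hzE : z ∈ E := sub_mem hw'E (Submodule.smul_mem _ _ hwE)
        have hzL : polar Q p z = 0 := by
          rw [hz, polar_sub_right, polar_smul_right, smul_eq_mul]
          field_simp
          ring
        have huz : polar Q u z = 0 := by
          have huu : Q u = 0 := (claim2 u huE huL).1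
          have hzz : Q z = 0 := (claim2 z hzE hzL).1
          have hsum : Q (u + z) = 0 :=
            (claim2 (u + z) (add_mem huE hzE) (by rw [polar_add_right, huL, hzL, add_zero])).1
          rw [Q_add, huu, hzz] at hsum
          linear_combination hsum
        have huw : polar Q u w = 0 := by
          rw [polar_comm]
          exact (claim2 u huE huL).2
        have hw' : polar Q u w' = 0 := by
          have hw'eq : w' = z + ((polar Q p w') / (polar Q p w)) • w := by rw [hz]; abel
          rw [hw'eq, polar_add_right, polar_smul_right, huz, huw, smul_eq_mul, mul_zero,
            add_zero]
        rw [polar_add_right, polar_smul_right, hup, hw', smul_eq_mul, mul_zero, add_zero]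
      exact hu0 (hQ u hu)
    · push_neg at hex
      apply hp0
      apply hQ
      intro v
      obtain ⟨α, w', hw'E, rfl⟩ := hdecomp v
      rw [polar_add_right, polar_smul_right, polar_self', hQp0, hex w' hw'E]
      simp
  refine ⟨hQp, ?_⟩
  -- Goal 2 : polar Q p w = 0 for all w ∈ E
  have hperp : ∀ w ∈ E, polar Q p w = 0 := by
    by_contra hex
    push_neg at hex
    obtain ⟨w, hwE, hwL⟩ := hex
    have K : ∀ w' ∈ E, polar Q p w' ≠ 0 → Q w' ≠ 0 := by
      intro w' hw'E hw'L hQw'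
      set α : F := -(polar Q p w') / (Q p) with hα
      have hαne : α ≠ 0 := by
        rw [hα]
        exact div_ne_zero (neg_ne_zero.2 hw'L) hQp
      have hQv : Q (α • p + w') = 0 := by
        rw [Q_expand, hQw', hα]
        field_simp
        ring
      have := hstar α w' hw'E hQv
      rcases mul_eq_zero.1 this with hc | hc
      · exact hαne hc
      · exact hw'L hc
    by_cases hQu : Q u ≠ 0
    · -- use exists_root_sum_quadratic
      classical
      obtain ⟨α, t, hroot⟩ := FiniteField.exists_root_sum_quadratic
        (f := Polynomial.C (Q p) * Polynomial.X ^ 2 + Polynomial.C (polar Q p w) * Polynomial.X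
          + Polynomial.C (Q w))
        (g := Polynomial.C (Q u) * Polynomial.X ^ 2 + Polynomial.C (polar Q w u) * Polynomial.X
          + Polynomial.C 0)
        (Polynomial.degree_quadratic hQp) (Polynomial.degree_quadratic hQu) hcard
      simp only [Polynomial.eval_add, Polynomial.eval_mul, Polynomial.eval_pow,
        Polynomial.eval_C, Polynomial.eval_X] at hroot
      have hwtE : w + t • u ∈ E := add_mem hwE (Submodule.smul_mem _ _ huE)
      have hwtL : polar Q p (w + t • u) = polar Q p w := by
        rw [polar_add_right, polar_smul_right, huL, smul_eq_mul, mul_zero, add_zero]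
      have hQv : Q (α • p + (w + t • u)) = 0 := by
        rw [Q_expand, hwtL, Q_add, Q_smul, polar_smul_right]
        simp only [smul_eq_mul]
        linear_combination hroot
      have := hstar α _ hwtE hQv
      rw [hwtL] at this
      rcases mul_eq_zero.1 this with hc | hc
      · -- α = 0, so Q (w + t • u) = 0 with polar ≠ 0 : contradiction with K
        rw [hc] at hQv
        simp only [zero_smul, zero_add] at hQv
        exact K _ hwtE (by rw [hwtL]; exact hwL) hQv
      · exact hwL hc
    · push_neg at hQu
      by_cases hpwu : polar Q w u ≠ 0
      · set t : F := -(Q p + polar Q p w + Q w) / (polar Q w u) with ht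
        have hwtE : w + t • u ∈ E := add_mem hwE (Submodule.smul_mem _ _ huE)
        have hwtL : polar Q p (w + t • u) = polar Q p w := by
          rw [polar_add_right, polar_smul_right, huL, smul_eq_mul, mul_zero, add_zero]
        have hQv : Q ((1:F) • p + (w + t • u)) = 0 := by
          rw [Q_expand, hwtL, Q_add, Q_smul, polar_smul_right, hQu]
          simp only [smul_eq_mul]
          rw [ht]
          field_simp
          ring
        have := hstar 1 _ hwtE hQv
        rw [hwtL, one_mul] at this
        exact hwL this
      · push_neg at hpwu
        -- polar Q u · = 0 everywhere, contradiction
        apply hu0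
        apply hQ
        -- first : every z ∈ E with polar Q p z = 0 is a multiple of u
        have hS : ∀ z, z ∈ E → polar Q p z = 0 → ∃ c : F, z = c • u := by
          have hfin1 : Module.finrank F (E ⊓ LinearMap.ker (polarFun Q p) : Submodule F (V3 F)) = 1 := by
            have hle : (E ⊓ LinearMap.ker (polarFun Q p) : Submodule F (V3 F)) ≤ E := inf_le_left
            have hmono := Submodule.finrank_mono hle
            rw [hE2] at hmono
            have hge : (Submodule.span F {u}) ≤ (E ⊓ LinearMap.ker (polarFun Q p) : Submodule F (V3 F)) := by
              rw [Submodule.span_singleton_le_iff_mem]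
              exact ⟨huE, huL⟩
            have h1 := Submodule.finrank_mono hge
            rw [finrank_span_singleton hu0] at h1
            rcases Nat.lt_or_ge (Module.finrank F (E ⊓ LinearMap.ker (polarFun Q p) : Submodule F (V3 F))) 2 with hlt | hge2
            · omega
            · exfalso
              have heq : (E ⊓ LinearMap.ker (polarFun Q p) : Submodule F (V3 F)) = E := by
                apply Submodule.eq_of_le_of_finrank_le hle
                omega
              have : w ∈ (E ⊓ LinearMap.ker (polarFun Q p) : Submodule F (V3 F)) := by
                rw [heq]; exact hwE
              exact hwL this.2
          have hspan : Submodule.span F {u} = (E ⊓ LinearMap.ker (polarFun Q p) : Submodule F (V3 F)) := by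
            apply Submodule.eq_of_le_of_finrank_le
            · rw [Submodule.span_singleton_le_iff_mem]
              exact ⟨huE, huL⟩
            · rw [hfin1, finrank_span_singleton hu0]
          intro z hzE hzL
          have : z ∈ Submodule.span F {u} := by
            rw [hspan]
            exact ⟨hzE, hzL⟩
          obtain ⟨c, hc⟩ := Submodule.mem_span_singleton.1 this
          exact ⟨c, hc.symm⟩
        intro v
        obtain ⟨α, w', hw'E, rfl⟩ := hdecomp v
        obtain ⟨c, hc⟩ := hS (w' - ((polar Q p w') / (polar Q p w)) • w)
          (sub_mem hw'E (Submodule.smul_mem _ _ hwE))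
          (by rw [polar_sub_right, polar_smul_right, smul_eq_mul]; field_simp; ring)
        have huself : polar Q u u = 0 := by rw [polar_self', hQu, mul_zero]
        have hup : polar Q u p = 0 := by rw [polar_comm]; exact huL
        have huw : polar Q u w = 0 := by rw [polar_comm]; exact hpwu
        have huw' : polar Q u w' = 0 := by
          have := congrArg (fun x => polar Q u x) hc
          rw [polar_sub_right, polar_smul_right, huw, polar_smul_right, huself] at this
          simp only [smul_eq_mul, mul_zero, sub_zero] at this
          exact this
        rw [polar_add_right, polar_smul_right, hup, huw']
        simp
  -- conclusion
  intro v
  obtain ⟨α, w, hwE, rfl⟩ := hdecomp v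
  rw [map_add, _root_.map_smul, hpm, map_add, _root_.map_smul, reflMap_self Q p hQp,
    reflMap_perp Q p w (hperp w hwE), (hmemE w).1 hwE]


lemma reflPerm_isProjy (Q : QuadraticForm F (V3 F)) (p : V3 F) : IsProjy (reflPerm Q p) := by
  refine ⟨reflEquiv Q p, fun x => ?_⟩
  conv_lhs => rw [← Projectivization.mk_rep x]
  rw [reflPerm_mk]
  conv_rhs => rw [← Projectivization.mk_rep x]
  rw [Projectivization.map_mk]
  rfl

lemma reflPerm_mem_conicStab (Q : QuadraticForm F (V3 F)) (p : V3 F)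
    (O : Set (Pt' F)) (hO : O = {x : Pt' F | Q x.rep = 0}) :
    reflPerm Q p ∈ ConicStab O := by
  refine ⟨reflPerm_isProjy Q p, fun x => ?_⟩
  subst hO
  simp only [Set.mem_setOf_eq]
  have hrw : reflPerm Q p x =
      Projectivization.mk F (reflMap Q p x.rep) (reflMap_ne_zero Q p x.rep_nonzero) := rfl
  rw [hrw, Q_rep_mk, Q_reflMap]

lemma reflPerm_center (Q : QuadraticForm F (V3 F)) (p : V3 F) (hp0 : p ≠ 0) :
    IsCenterOf (reflPerm Q p) (Projectivization.mk F p hp0) := by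
  rintro L ⟨f, hf0, rfl⟩ hC y
  simp only [Set.mem_setOf_eq] at hC ⊢
  have hfp : f p = 0 := (f_rep_mk f p hp0).1 hC
  have hrw : reflPerm Q p y =
      Projectivization.mk F (reflMap Q p y.rep) (reflMap_ne_zero Q p y.rep_nonzero) := rfl
  rw [hrw, f_rep_mk]
  have : f (reflMap Q p y.rep) = f y.rep := by
    rw [reflMap_apply, LinearMap.map_sub, _root_.map_smul, hfp, smul_eq_mul, mul_zero, sub_zero]
  rw [this]

lemma reflPerm_congr (Q : QuadraticForm F (V3 F)) (p p' : V3 F)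
    (h : ∀ v, reflMap Q p v = reflMap Q p' v) : reflPerm Q p = reflPerm Q p' := by
  ext x
  have h1 : reflPerm Q p x =
      Projectivization.mk F (reflMap Q p x.rep) (reflMap_ne_zero Q p x.rep_nonzero) := rfl
  have h2 : reflPerm Q p' x =
      Projectivization.mk F (reflMap Q p' x.rep) (reflMap_ne_zero Q p' x.rep_nonzero) := rfl
  rw [h1, h2, Projectivization.mk_eq_mk_iff]
  exact ⟨1, by simp [h]⟩

lemma reflPerm_unique (Q : QuadraticForm F (V3 F)) (h2 : (2 : F) ≠ 0) (p p' : V3 F)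
    (hp : Q p ≠ 0) (hp' : Q p' ≠ 0) (heq : reflPerm Q p = reflPerm Q p') :
    Projectivization.mk F p' (ne_zero_of_Q_ne_zero hp') =
      Projectivization.mk F p (ne_zero_of_Q_ne_zero hp) := by
  have hpt : ∀ (v : V3 F) (hv : v ≠ 0),
      Projectivization.mk F (reflMap Q p v) (reflMap_ne_zero Q p hv) =
      Projectivization.mk F (reflMap Q p' v) (reflMap_ne_zero Q p' hv) := by
    intro v hv
    rw [← reflPerm_mk Q p v hv, ← reflPerm_mk Q p' v hv, heq]
  -- the composite is projectively trivial
  have hcomp : ∀ (v : V3 F), v ≠ 0 → ∃ a : F, (reflMap Q p ∘ₗ reflMap Q p') v = a • v := by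
    intro v hv
    have hright : Projectivization.mk F (reflMap Q p' (reflMap Q p' v))
        (reflMap_ne_zero Q p' (reflMap_ne_zero Q p' hv)) = Projectivization.mk F v hv := by
      rw [Projectivization.mk_eq_mk_iff]
      exact ⟨1, by simp [reflMap_reflMap]⟩
    have := hpt (reflMap Q p' v) (reflMap_ne_zero Q p' hv)
    rw [hright, Projectivization.mk_eq_mk_iff] at this
    obtain ⟨b, hb⟩ := this
    exact ⟨(b : F), by rw [LinearMap.comp_apply, ← hb, Units.smul_def]⟩
  obtain ⟨a, ha⟩ := eq_smul_id_of_proj_trivial _ hcomp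
  -- evaluate on a common perpendicular vector
  obtain ⟨w, hw0, hwp, hwp'⟩ := exists_ne_zero_inf (LinearMap.ker (polarFun Q p))
    (LinearMap.ker (polarFun Q p')) (by
      have h1 := two_le_finrank_ker (polarFun Q p)
      have h2 := two_le_finrank_ker (polarFun Q p')
      omega)
  have hwp0 : polar Q p w = 0 := hwp
  have hwp'0 : polar Q p' w = 0 := hwp'
  have hew : (reflMap Q p ∘ₗ reflMap Q p') w = w := by
    rw [LinearMap.comp_apply, reflMap_perp Q p' w hwp'0, reflMap_perp Q p w hwp0]
  have ha1 : a = 1 := by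
    have := (ha w).symm.trans hew
    have h01 : (a - 1) • w = 0 := by
      rw [sub_smul, one_smul, this, sub_self]
    rcases smul_eq_zero.1 h01 with hc | hc
    · exact sub_eq_zero.1 hc
    · exact absurd hc hw0
  have hep' : reflMap Q p p' = -p' := by
    have h1 : (reflMap Q p ∘ₗ reflMap Q p') p' = p' := by rw [ha p', ha1, one_smul]
    rw [LinearMap.comp_apply, reflMap_self Q p' hp', LinearMap.map_neg] at h1
    linear_combination (norm := module) -h1
  rw [reflMap_apply] at hep'
  have hp'p : p' = ((2:F)⁻¹ * ((Q p)⁻¹ * polar Q p p')) • p := by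
    have h2p : (2:F) • p' = ((Q p)⁻¹ * polar Q p p') • p := by
      linear_combination (norm := module) hep'
    rw [mul_smul, ← h2p, smul_smul, inv_mul_cancel₀ h2, one_smul]
  rw [Projectivization.mk_eq_mk_iff']
  exact ⟨_, hp'p.symm⟩

lemma classify (Q : QuadraticForm F (V3 F))
    (hQ : ∀ v : Fin 3 → F, (∀ w, QuadraticMap.polar Q v w = 0) → v = 0)
    (h2 : (2 : F) ≠ 0) [Fintype F] (hcard : Fintype.card F % 2 = 1)
    (O : Set (Pt' F)) (hO : O = {x : Pt' F | Q x.rep = 0})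
    (φ : Equiv.Perm (Pt' F)) (hmem : φ ∈ ConicStab O) (hsq : φ ^ 2 = 1) (hne : φ ≠ 1) :
    ∃ p : V3 F, Q p ≠ 0 ∧ φ = reflPerm Q p := by
  obtain ⟨⟨g, hg⟩, hstabO⟩ := hmem
  -- g ∘ g is projectively trivial
  have hgg : ∀ (v : V3 F), v ≠ 0 → ∃ a : F,
      (g.toLinearMap ∘ₗ g.toLinearMap) v = a • v := by
    intro v hv
    have hx : φ (φ (Projectivization.mk F v hv)) = Projectivization.mk F v hv := by
      have := congrFun (congrArg (fun (e : Equiv.Perm (Pt' F)) => (e : Pt' F → Pt' F)) hsq)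
        (Projectivization.mk F v hv)
      rw [pow_two] at this
      exact this
    rw [hg, hg, Projectivization.map_mk, Projectivization.map_mk] at hx
    rw [Projectivization.mk_eq_mk_iff] at hx
    obtain ⟨a, ha⟩ := hx
    exact ⟨(a : F), by rw [LinearMap.comp_apply, ← ha, Units.smul_def]⟩
  obtain ⟨a, ha⟩ := eq_smul_id_of_proj_trivial _ hgg
  -- a is a square
  set d : F := LinearMap.det (g : V3 F →ₗ[F] V3 F) with hd
  have hdu : IsUnit d := LinearEquiv.isUnit_det' g
  have hdne : d ≠ 0 := hdu.ne_zero
  have hcube : d * d = a ^ 3 := by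
    have h1 : g.toLinearMap ∘ₗ g.toLinearMap = a • (LinearMap.id : V3 F →ₗ[F] V3 F) := by
      refine LinearMap.ext fun v => ?_
      simpa using ha v
    have h2' := congrArg LinearMap.det h1
    rw [LinearMap.det_comp, LinearMap.det_smul, LinearMap.det_id, Module.finrank_fin_fun]
      at h2'
    simpa using h2'
  have hane : a ≠ 0 := by
    intro h0
    rw [h0] at hcube
    simp at hcube
    exact hdne hcube
  set s : F := d * a⁻¹ with hs
  have hsne : s ≠ 0 := mul_ne_zero hdne (inv_ne_zero hane)
  have hssq : s ^ 2 = a := by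
    calc s ^ 2 = (d * d) * (a⁻¹ * a⁻¹) := by rw [hs]; ring
      _ = a ^ 3 * (a⁻¹ * a⁻¹) := by rw [hcube]
      _ = a := by field_simp
  set h : V3 F →ₗ[F] V3 F := s⁻¹ • g.toLinearMap with hhdef
  have happ : ∀ v, h v = s⁻¹ • g v := fun v => rfl
  have hgg2 : ∀ v : V3 F, g (g v) = a • v := fun v => ha v
  have hinv : ∀ v, h (h v) = v := by
    intro v
    rw [happ, happ, _root_.map_smul, smul_smul, hgg2, smul_smul]
    have hone : s⁻¹ * s⁻¹ * a = 1 := by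
      rw [← hssq, pow_two]
      field_simp
    rw [hone, one_smul]
  have hne0 : ∀ (v : V3 F), v ≠ 0 → h v ≠ 0 := by
    intro v hv hc
    have := congrArg h hc
    rw [hinv] at this
    simp at this
    exact hv this
  have hφ : ∀ (v : V3 F) (hv : v ≠ 0),
      φ (Projectivization.mk F v hv) = Projectivization.mk F (h v) (hne0 v hv) := by
    intro v hv
    rw [hg, Projectivization.map_mk, Projectivization.mk_eq_mk_iff]
    refine ⟨(Units.mk0 s hsne), ?_⟩
    rw [happ, Units.smul_def, Units.val_mk0, smul_smul, mul_inv_cancel₀ hsne, one_smul]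
    rfl
  have hstab : ∀ v : V3 F, Q (h v) = 0 ↔ Q v = 0 := by
    intro v
    rcases eq_or_ne v 0 with rfl | hv
    · rw [map_zero]
    · have := hstabO (Projectivization.mk F v hv)
      rw [hφ v hv, hO] at this
      simp only [Set.mem_setOf_eq] at this
      rw [Q_rep_mk, Q_rep_mk] at this
      exact this
  have hnotscalar : ∀ c : F, ¬ (∀ v, h v = c • v) := by
    intro c hc
    apply hne
    ext x
    show φ x = x
    conv_lhs => rw [← Projectivization.mk_rep x]
    rw [hφ _ x.rep_nonzero]
    conv_rhs => rw [← Projectivization.mk_rep x]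
    rw [Projectivization.mk_eq_mk_iff]
    have hcne : c ≠ 0 := by
      intro h0
      have := hne0 x.rep x.rep_nonzero
      rw [hc, h0, zero_smul] at this
      exact this rfl
    exact ⟨Units.mk0 c hcne, by rw [hc, Units.smul_def, Units.val_mk0]⟩
  -- eigenspaces
  set Kp : Submodule F (V3 F) := LinearMap.ker (h - LinearMap.id) with hKp
  set Km : Submodule F (V3 F) := LinearMap.ker (h + LinearMap.id) with hKm
  have hmemKp : ∀ w, w ∈ Kp ↔ h w = w := by
    intro w
    rw [hKp, LinearMap.mem_ker, LinearMap.sub_apply, LinearMap.id_apply, sub_eq_zero]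
  have hmemKm : ∀ w, w ∈ Km ↔ h w = -w := by
    intro w
    rw [hKm, LinearMap.mem_ker, LinearMap.add_apply, LinearMap.id_apply, add_eq_zero_iff_eq_neg]
  have hsup : Kp ⊔ Km = ⊤ := by
    rw [Submodule.eq_top_iff']
    intro v
    have hplus : (2:F)⁻¹ • (v + h v) ∈ Kp := by
      rw [hmemKp, _root_.map_smul, LinearMap.map_add, hinv]
      congr 1
      abel
    have hminus : (2:F)⁻¹ • (v - h v) ∈ Km := by
      rw [hmemKm, _root_.map_smul, LinearMap.map_sub, hinv, ← smul_neg]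
      congr 1
      abel
    have : v = (2:F)⁻¹ • (v + h v) + (2:F)⁻¹ • (v - h v) := by
      have hhalf : (2:F)⁻¹ + (2:F)⁻¹ = 1 := by rw [← two_mul, mul_inv_cancel₀ h2]
      have hv2 : ((2:F)⁻¹ + (2:F)⁻¹) • v = v := by rw [hhalf, one_smul]
      rw [add_smul] at hv2
      rw [smul_add, smul_sub]
      calc v = ((2:F)⁻¹ • v + (2:F)⁻¹ • v) := hv2.symm
        _ = _ := by abel
    rw [this]
    exact Submodule.add_mem_sup hplus hminus
  have hinf : Kp ⊓ Km = ⊥ := by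
    rw [Submodule.eq_bot_iff]
    intro v hv
    obtain ⟨h1, h3⟩ := Submodule.mem_inf.1 hv
    rw [hmemKp] at h1
    rw [hmemKm] at h3
    have : (2:F) • v = 0 := by
      rw [two_smul]
      nth_rewrite 1 [← h1]
      rw [h3]
      abel
    rcases smul_eq_zero.1 this with hc | hc
    · exact absurd hc h2
    · exact hc
  have hfrsum : Module.finrank F Kp + Module.finrank F Km = 3 := by
    have := Submodule.finrank_sup_add_finrank_inf_eq Kp Km
    rw [hsup, hinf] at this
    rw [finrank_top, Module.finrank_fin_fun] at this
    simpa using this.symm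
  have hKpne : Kp ≠ ⊥ := by
    intro hbot
    apply hnotscalar (-1)
    intro v
    have : (2:F)⁻¹ • (v + h v) ∈ Kp := by
      rw [hmemKp, _root_.map_smul, LinearMap.map_add, hinv]
      congr 1
      abel
    rw [hbot, Submodule.mem_bot, smul_eq_zero] at this
    rcases this with hc | hc
    · exact absurd hc (inv_ne_zero h2)
    · have : h v = -v := by
        have := hc
        rw [add_eq_zero_iff_eq_neg] at this
        linear_combination (norm := module) this
      rw [this, neg_one_smul]
  have hKmne : Km ≠ ⊥ := by
    intro hbot
    apply hnotscalar 1
    intro v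
    have : (2:F)⁻¹ • (v - h v) ∈ Km := by
      rw [hmemKm, _root_.map_smul, LinearMap.map_sub, hinv, ← smul_neg]
      congr 1
      abel
    rw [hbot, Submodule.mem_bot, smul_eq_zero] at this
    rcases this with hc | hc
    · exact absurd hc (inv_ne_zero h2)
    · have : h v = v := by
        rw [sub_eq_zero] at hc
        exact hc.symm
      rw [this, one_smul]
  have hKppos : Module.finrank F Kp ≠ 0 := by
    intro h0
    exact hKpne (Submodule.finrank_eq_zero.1 h0)
  have hKmpos : Module.finrank F Km ≠ 0 := by
    intro h0
    exact hKmne (Submodule.finrank_eq_zero.1 h0)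
  -- helper for producing the final answer from a suitable h'
  have main : ∀ h' : V3 F →ₗ[F] V3 F, (∀ v, h' (h' v) = v) →
      (∀ v, Q (h' v) = 0 ↔ Q v = 0) →
      (∀ (v : V3 F) (hv : v ≠ 0) (hv' : h' v ≠ 0),
        φ (Projectivization.mk F v hv) = Projectivization.mk F (h' v) hv') →
      Module.finrank F (LinearMap.ker (h' + LinearMap.id)) = 1 →
      Module.finrank F (LinearMap.ker (h' - LinearMap.id)) = 2 →
      ∃ p : V3 F, Q p ≠ 0 ∧ φ = reflPerm Q p := by
    intro h' hinv' hstab' hφ' hm1 hp2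
    obtain ⟨p, hpmem, hp0⟩ := Submodule.exists_mem_ne_zero_of_ne_bot
      (p := LinearMap.ker (h' + LinearMap.id)) (by
        intro hbot
        rw [hbot] at hm1
        simp at hm1)
    have hpm : h' p = -p := by
      have := hpmem
      rw [LinearMap.mem_ker, LinearMap.add_apply, LinearMap.id_apply,
        add_eq_zero_iff_eq_neg] at this
      exact this
    have hker : ∀ z, h' z = -z → ∃ c : F, z = c • p := by
      intro z hz
      have hzmem : z ∈ LinearMap.ker (h' + LinearMap.id) := by
        rw [LinearMap.mem_ker, LinearMap.add_apply, LinearMap.id_apply,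
          add_eq_zero_iff_eq_neg]
        exact hz
      have hspan : Submodule.span F {p} = LinearMap.ker (h' + LinearMap.id) := by
        apply Submodule.eq_of_le_of_finrank_le
        · rw [Submodule.span_singleton_le_iff_mem]
          exact hpmem
        · rw [hm1, finrank_span_singleton hp0]
      rw [← hspan] at hzmem
      obtain ⟨c, hc⟩ := Submodule.mem_span_singleton.1 hzmem
      exact ⟨c, hc.symm⟩
    obtain ⟨hQp, hrefl⟩ := core Q hQ h2 hcard h' hinv' hstab' p hp0 hpm hker hp2
    refine ⟨p, hQp, ?_⟩
    ext x
    conv_lhs => rw [← Projectivization.mk_rep x]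
    have hne0' : h' x.rep ≠ 0 := by
      intro hc
      have := congrArg h' hc
      rw [hinv'] at this
      simp at this
      exact x.rep_nonzero this
    rw [hφ' _ x.rep_nonzero hne0']
    have hrw : reflPerm Q p x =
        Projectivization.mk F (reflMap Q p x.rep) (reflMap_ne_zero Q p x.rep_nonzero) := rfl
    rw [hrw, Projectivization.mk_eq_mk_iff]
    exact ⟨1, by simp [hrefl x.rep]⟩
  rcases Nat.lt_or_ge (Module.finrank F Km) 2 with hlt | hge
  · -- finrank Km = 1
    have hm1 : Module.finrank F Km = 1 := by omega
    have hp2 : Module.finrank F Kp = 2 := by omega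
    exact main h hinv hstab (fun v hv hv' => hφ v hv) hm1 hp2
  · -- finrank Kp = 1 ; use -h
    have hp1 : Module.finrank F Kp = 1 := by omega
    have hm2 : Module.finrank F Km = 2 := by omega
    have hker1 : LinearMap.ker (-h + LinearMap.id) = Kp := by
      ext v
      rw [LinearMap.mem_ker, LinearMap.add_apply, LinearMap.neg_apply, LinearMap.id_apply,
        hmemKp, neg_add_eq_zero]
    have hker2 : LinearMap.ker (-h - LinearMap.id) = Km := by
      ext v
      rw [LinearMap.mem_ker, LinearMap.sub_apply, LinearMap.neg_apply, LinearMap.id_apply,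
        hmemKm]
      constructor
      · intro hh
        have : h v = -v := by linear_combination (norm := module) -hh
        exact this
      · intro hh
        simp [hh]
    refine main (-h) (fun v => by simp [hinv v]) (fun v => by
        have hneg : Q ((-h) v) = Q (h v) := by
          rw [LinearMap.neg_apply, ← neg_one_smul F (h v), Q_smul]
          ring
        rw [hneg]
        exact hstab v
        ) (fun v hv hv' => by
        rw [hφ v hv, Projectivization.mk_eq_mk_iff]
        refine ⟨-1, ?_⟩
        rw [LinearMap.neg_apply, Units.smul_def]
        simp
        ) ?_ ?_
    · rw [hker1]; exact hp1
    · rw [hker2]; exact hm2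

/-- The map sending an involution of the stabilizer of a non-degenerate conic
to its center is a bijection between involutions and points off the conic. -/
theorem involution_center_bijection
    (F : Type) [Field F] [Fintype F] (hodd : Odd (Fintype.card F))
    (Q : QuadraticForm F (Fin 3 → F))
    (hQ : ∀ v : Fin 3 → F, (∀ w, QuadraticMap.polar Q v w = 0) → v = 0)
    (O : Set (Pt F)) (hO : O = {x : Pt F | Q x.rep = 0}) :
    ∃ c : {φ : Equiv.Perm (Pt F) // φ ∈ ConicStab O ∧ φ ^ 2 = 1 ∧ φ ≠ 1} → {X : Pt F // X ∉ O},
      (∀ φ, IsCenterOf φ.1 (c φ).1) ∧ Function.Bijective c := by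
  classical
  have h2 : (2 : F) ≠ 0 := two_ne_zero_of_odd_card hodd
  have hcard : Fintype.card F % 2 = 1 := Nat.odd_iff.mp hodd
  have spec : ∀ φ : {φ : Equiv.Perm (Pt F) // φ ∈ ConicStab O ∧ φ ^ 2 = 1 ∧ φ ≠ 1},
      ∃ p : V3 F, Q p ≠ 0 ∧ φ.1 = reflPerm Q p :=
    fun φ => classify Q hQ h2 hcard O hO φ.1 φ.2.1 φ.2.2.1 φ.2.2.2
  set pfun : {φ : Equiv.Perm (Pt F) // φ ∈ ConicStab O ∧ φ ^ 2 = 1 ∧ φ ≠ 1} → V3 F :=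
    fun φ => Classical.choose (spec φ) with hpfun
  have hpQ : ∀ φ, Q (pfun φ) ≠ 0 := fun φ => (Classical.choose_spec (spec φ)).1
  have hpφ : ∀ φ, φ.1 = reflPerm Q (pfun φ) := fun φ => (Classical.choose_spec (spec φ)).2
  refine ⟨fun φ => ⟨Projectivization.mk F (pfun φ) (ne_zero_of_Q_ne_zero (hpQ φ)), by
      rw [hO]
      intro hmem
      exact hpQ φ ((Q_rep_mk Q _ _).1 hmem)⟩, fun φ => ?_, ?_, ?_⟩
  · -- center
    rw [hpφ φ]
    exact reflPerm_center Q (pfun φ) (ne_zero_of_Q_ne_zero (hpQ φ))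
  · -- injective
    intro φ₁ φ₂ hc
    have hmk : Projectivization.mk F (pfun φ₁) (ne_zero_of_Q_ne_zero (hpQ φ₁)) =
        Projectivization.mk F (pfun φ₂) (ne_zero_of_Q_ne_zero (hpQ φ₂)) :=
      congrArg Subtype.val hc
    obtain ⟨a, ha⟩ := (Projectivization.mk_eq_mk_iff F _ _ _ _).1 hmk
    have hmap : ∀ v, reflMap Q (pfun φ₁) v = reflMap Q (pfun φ₂) v := by
      intro v
      rw [← ha, Units.smul_def]
      exact reflMap_smul_base Q (pfun φ₂) (hpQ φ₂) (a : F) (Units.ne_zero a) v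
    apply Subtype.ext
    rw [hpφ φ₁, hpφ φ₂]
    exact reflPerm_congr Q _ _ hmap
  · -- surjective
    rintro ⟨X, hX⟩
    have hQX : Q X.rep ≠ 0 := by
      intro h0
      apply hX
      rw [hO]
      exact h0
    set φ' : {φ : Equiv.Perm (Pt F) // φ ∈ ConicStab O ∧ φ ^ 2 = 1 ∧ φ ≠ 1} :=
      ⟨reflPerm Q X.rep, reflPerm_mem_conicStab Q X.rep O hO, reflPerm_sq Q X.rep,
        reflPerm_ne_one Q X.rep hQX h2⟩ with hφ'
    refine ⟨φ', ?_⟩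
    apply Subtype.ext
    have heq : reflPerm Q X.rep = reflPerm Q (pfun φ') := hpφ φ'
    have hres := reflPerm_unique Q h2 X.rep (pfun φ') hQX (hpQ φ') heq
    simp only
    rw [hres]
    exact Projectivization.mk_rep X
end

section
/- Let q be an odd prime power and let S be a set of involutions of AGL(1,q). Writing each involution of S as x ↦ −x + b, the pair (⟨S⟩, S) satisfies the intersection property (i.e., is a C-group) if and only if the set of associated points {b/2 : involutions x ↦ −x + b in S} (equivalently, the fixed points) is affinely independent over F_p in F_q viewed as an F_p-vector space. -/
attribute [local instance] ZMod.algebra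

section AuxAGL

variable {p : ℕ} [Fact p.Prime] {F : Type} [Field F] [CharP F p]

private lemma aglSmulVal (a : ZMod p) (v : F) : a • v = a.val • v := by
  have h : ((a.val : ℕ) : ZMod p) = a := by
    rw [ZMod.natCast_val, ZMod.cast_id]
  conv_lhs => rw [← h]
  rw [Nat.cast_smul_eq_nsmul]

private lemma aglHalves (hk : (2 : ZMod p) ≠ 0) (v : F) :
    (2⁻¹ : ZMod p) • v + (2⁻¹ : ZMod p) • v = v := by
  rw [← two_smul (ZMod p), smul_smul, mul_inv_cancel₀ hk, one_smul]

/-- The candidate subgroup: translations by the direction, and point reflections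
in points of `A`. -/
private def aglH (hk : (2 : ZMod p) ≠ 0) (A : AffineSubspace (ZMod p) F) :
    Subgroup (F ≃ᵃ[F] F) where
  carrier := {g | ((∀ x, g x = x + g 0) ∧ g 0 ∈ A.direction) ∨
      ((∀ x, g x = -x + g 0) ∧ ∃ d ∈ A, g 0 = d + d)}
  one_mem' := by
    left
    constructor
    · intro x; simp
    · simp only [AffineEquiv.coe_one, id_eq]
      exact A.direction.zero_mem
  mul_mem' := by
    rintro g h (⟨hg1, hg2⟩ | ⟨hg1, d, hd, hd2⟩) (⟨hh1, hh2⟩ | ⟨hh1, e, he, he2⟩)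
    · left
      refine ⟨fun x => ?_, ?_⟩
      · show g (h x) = x + g (h 0)
        rw [hg1 (h x), hh1 x, hg1 (h 0), hh1 0]; ring
      · show g (h 0) ∈ _
        rw [hg1 (h 0)]
        exact A.direction.add_mem hh2 hg2
    · right
      refine ⟨fun x => ?_, (2⁻¹ : ZMod p) • g 0 + e, ?_, ?_⟩
      · show g (h x) = -x + g (h 0)
        rw [hg1 (h x), hh1 x, hg1 (h 0)]; ring
      · have := AffineSubspace.vadd_mem_of_mem_direction
          (A.direction.smul_mem (2⁻¹ : ZMod p) hg2) he
        simpa [vadd_eq_add] using this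
      · show g (h 0) = _
        rw [hg1 (h 0), hh1 0, he2]
        have h2 : (2⁻¹ : ZMod p) • g 0 + (2⁻¹ : ZMod p) • g 0 = g 0 := aglHalves hk _
        linear_combination -h2
    · right
      refine ⟨fun x => ?_, (2⁻¹ : ZMod p) • (-h 0) + d, ?_, ?_⟩
      · show g (h x) = -x + g (h 0)
        rw [hg1 (h x), hh1 x, hg1 (h 0)]; ring
      · have := AffineSubspace.vadd_mem_of_mem_direction
          (A.direction.smul_mem (2⁻¹ : ZMod p) (A.direction.neg_mem hh2)) hd
        simpa [vadd_eq_add] using this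
      · show g (h 0) = _
        rw [hg1 (h 0), hd2]
        have h2 : (2⁻¹ : ZMod p) • (-h 0) + (2⁻¹ : ZMod p) • (-h 0) = -h 0 := aglHalves hk _
        linear_combination -h2
    · left
      refine ⟨fun x => ?_, ?_⟩
      · show g (h x) = x + g (h 0)
        rw [hg1 (h x), hh1 x, hg1 (h 0)]; ring
      · show g (h 0) ∈ _
        have h2 : g (h 0) = (2 : ZMod p) • (d -ᵥ e) := by
          rw [hg1 (h 0), vsub_eq_sub, two_smul, hh1 0, hd2, he2]; ring
        rw [h2]
        exact A.direction.smul_mem _ (AffineSubspace.vsub_mem_direction hd he)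
  inv_mem' := by
    rintro g (⟨hg1, hg2⟩ | ⟨hg1, d, hd, hd2⟩)
    all_goals
      have hcan : ∀ y : F, g (g⁻¹ y) = y := fun y => by
        have h1 : g * g⁻¹ = 1 := mul_inv_cancel g
        calc g (g⁻¹ y) = (g * g⁻¹) y := by rw [AffineEquiv.coe_mul]; rfl
          _ = y := by rw [h1]; rfl
      have hginj : Function.Injective g := g.toEquiv.injective
    · left
      have hinv : ∀ y, g⁻¹ y = y - g 0 := by
        intro y
        apply hginj
        rw [hcan y, hg1 (y - g 0)]; ring
      refine ⟨fun y => ?_, ?_⟩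
      · rw [hinv y, hinv 0]; ring
      · rw [hinv 0]
        simpa using A.direction.neg_mem hg2
    · right
      have hinv : ∀ y, g⁻¹ y = -y + g 0 := by
        intro y
        apply hginj
        rw [hcan y, hg1 (-y + g 0)]; ring
      refine ⟨fun y => ?_, d, hd, ?_⟩
      · rw [hinv y, hinv 0]; ring
      · rw [hinv 0, hd2]; ring

private lemma mem_aglH {hk : (2 : ZMod p) ≠ 0} {A : AffineSubspace (ZMod p) F}
    {g : F ≃ᵃ[F] F} :
    g ∈ aglH hk A ↔ ((∀ x, g x = x + g 0) ∧ g 0 ∈ A.direction) ∨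
      ((∀ x, g x = -x + g 0) ∧ ∃ d ∈ A, g 0 = d + d) := Iff.rfl

private lemma aglH_mono {hk : (2 : ZMod p) ≠ 0} {A B : AffineSubspace (ZMod p) F}
    (hAB : A ≤ B) : aglH hk A ≤ aglH hk B := by
  rintro g (⟨h1, h2⟩ | ⟨h1, d, hd, hd2⟩)
  · exact Or.inl ⟨h1, AffineSubspace.direction_le hAB h2⟩
  · exact Or.inr ⟨h1, d, hAB hd, hd2⟩

/-- Translations by elements of a set closed under the generated group. -/
private def aglT (p : ℕ) [Fact p.Prime] {F : Type} [Field F] [CharP F p] {ι : Type}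
    (α : ι → (F ≃ᵃ[F] F)) (J : Set ι) : Submodule (ZMod p) F where
  carrier := {v | AffineEquiv.constVAdd F F v ∈ Subgroup.closure (α '' J)}
  zero_mem' := by
    show AffineEquiv.constVAdd F F (0 : F) ∈ Subgroup.closure (α '' J)
    have h0 : AffineEquiv.constVAdd F F (0 : F) = 1 := by
      ext x; simp
    rw [h0]
    exact Subgroup.one_mem _
  add_mem' := by
    intro a b ha hb
    show AffineEquiv.constVAdd F F (a + b) ∈ Subgroup.closure (α '' J)
    have h0 : AffineEquiv.constVAdd F F (a + b) =
        AffineEquiv.constVAdd F F a * AffineEquiv.constVAdd F F b := by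
      ext x; simp [AffineEquiv.coe_mul, vadd_eq_add, add_assoc]
    rw [h0]
    exact Subgroup.mul_mem _ ha hb
  smul_mem' := by
    intro a v hv
    show AffineEquiv.constVAdd F F (a • v) ∈ Subgroup.closure (α '' J)
    rw [aglSmulVal, AffineEquiv.constVAdd_nsmul]
    exact Subgroup.pow_mem _ hv _

private lemma agl_closure_eq (hk : (2 : ZMod p) ≠ 0) {ι : Type}
    (α : ι → (F ≃ᵃ[F] F)) (c : ι → F)
    (hform : ∀ i x, α i x = -x + (c i + c i)) (J : Set ι) :
    Subgroup.closure (α '' J) = aglH hk (affineSpan (ZMod p) (c '' J)) := by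
  have hα0 : ∀ i, α i 0 = c i + c i := fun i => by rw [hform]; ring
  have htransT : (affineSpan (ZMod p) (c '' J)).direction ≤ aglT p α J := by
    rw [direction_affineSpan, vectorSpan_def]
    apply Submodule.span_le.2
    rintro v hv
    rw [Set.mem_vsub] at hv
    obtain ⟨x, hx, y, hy, rfl⟩ := hv
    obtain ⟨i, hi, rfl⟩ := hx
    obtain ⟨j, hj, rfl⟩ := hy
    have hw : ((c i + c i) - (c j + c j) : F) ∈ aglT p α J := by
      show AffineEquiv.constVAdd F F ((c i + c i) - (c j + c j) : F) ∈ Subgroup.closure (α '' J)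
      have h0 : AffineEquiv.constVAdd F F ((c i + c i) - (c j + c j) : F) = α i * α j := by
        ext x
        simp only [AffineEquiv.coe_mul, Function.comp_apply, AffineEquiv.constVAdd_apply,
          vadd_eq_add]
        rw [hform i (α j x), hform j x]; ring
      rw [h0]
      exact Subgroup.mul_mem _ (Subgroup.subset_closure ⟨i, hi, rfl⟩)
        (Subgroup.subset_closure ⟨j, hj, rfl⟩)
    have h2 := (aglT p α J).smul_mem (2⁻¹ : ZMod p) hw
    have h3 : (2⁻¹ : ZMod p) • ((c i + c i) - (c j + c j) : F) = c i - c j := by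
      have : ((c i + c i) - (c j + c j) : F) = (c i - c j) + (c i - c j) := by ring
      rw [this, ← two_smul (ZMod p), smul_smul, inv_mul_cancel₀ hk, one_smul]
    rw [h3] at h2
    simpa [vsub_eq_sub] using h2
  have htrans : ∀ v ∈ (affineSpan (ZMod p) (c '' J)).direction,
      AffineEquiv.constVAdd F F v ∈ Subgroup.closure (α '' J) := fun v hv => htransT hv
  apply le_antisymm
  · apply Subgroup.closure_le _ |>.2
    rintro _ ⟨i, hi, rfl⟩
    right
    exact ⟨fun x => by rw [hform i x, hα0 i], c i,
      mem_affineSpan _ (Set.mem_image_of_mem c hi), hα0 i⟩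
  · rintro g (⟨hg1, hg2⟩ | ⟨hg1, d, hd, hd2⟩)
    · have h0 : g = AffineEquiv.constVAdd F F (g 0) := by
        ext x
        simp only [AffineEquiv.constVAdd_apply, vadd_eq_add]
        rw [hg1 x]; ring
      rw [h0]
      exact htrans _ hg2
    · obtain ⟨_, j0, hj0, rfl⟩ := (affineSpan_nonempty (ZMod p)).1 ⟨d, hd⟩
      have h0 : g = AffineEquiv.constVAdd F F (g 0 - (c j0 + c j0)) * α j0 := by
        ext x
        simp only [AffineEquiv.coe_mul, Function.comp_apply, AffineEquiv.constVAdd_apply,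
          vadd_eq_add]
        rw [hform j0 x, hg1 x]; ring
      rw [h0]
      refine Subgroup.mul_mem _ (htrans _ ?_) (Subgroup.subset_closure ⟨j0, hj0, rfl⟩)
      have h2 : g 0 - (c j0 + c j0) = (2 : ZMod p) • (d -ᵥ c j0) := by
        rw [vsub_eq_sub, two_smul, hd2]; ring
      rw [h2]
      exact Submodule.smul_mem _ _ (AffineSubspace.vsub_mem_direction hd
        (mem_affineSpan _ (Set.mem_image_of_mem c hj0)))

private lemma agl_span_inter {ι : Type} {c : ι → F}
    (ha : AffineIndependent (ZMod p) c) (J K : Set ι) {x : F}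
    (hJ : x ∈ affineSpan (ZMod p) (c '' J)) (hK : x ∈ affineSpan (ZMod p) (c '' K)) :
    x ∈ affineSpan (ZMod p) (c '' (J ∩ K)) := by
  classical
  rw [Set.image_eq_range, mem_affineSpan_iff_eq_affineCombination,
    ← Finset.eq_affineCombination_subset_iff_eq_affineCombination_subtype] at hJ hK
  obtain ⟨fs1, hfs1, w1, hw1, hx1⟩ := hJ
  obtain ⟨fs2, hfs2, w2, hw2, hx2⟩ := hK
  have hind := (affineIndependent_iff_indicator_eq_of_affineCombination_eq (ZMod p) c).1 ha
    fs1 fs2 w1 w2 hw1 hw2 (hx1 ▸ hx2)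
  have hvan : ∀ j ∈ fs1, j ∉ fs2 → w1 j = 0 := by
    intro j hj1 hj2
    have h1 : Set.indicator (↑fs1) w1 j = w1 j := Set.indicator_of_mem hj1 w1
    have h2 : Set.indicator (↑fs2) w2 j = 0 := Set.indicator_of_notMem hj2 w2
    rw [← h1, hind, h2]
  rw [Set.image_eq_range, mem_affineSpan_iff_eq_affineCombination,
    ← Finset.eq_affineCombination_subset_iff_eq_affineCombination_subtype]
  refine ⟨fs1 ∩ fs2, ?_, w1, ?_, ?_⟩
  · intro j hj
    rcases Finset.mem_inter.1 hj with ⟨h1, h2⟩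
    exact ⟨hfs1 h1, hfs2 h2⟩
  · rw [Finset.sum_subset Finset.inter_subset_left
      (fun j hj hj' => hvan j hj (fun h2 => hj' (Finset.mem_inter.2 ⟨hj, h2⟩)))]
    exact hw1
  · rw [hx1, Finset.affineCombination_indicator_subset w1 c
      (Finset.inter_subset_left (s₂ := fs2))]
    apply Finset.affineCombination_congr
    · intro j hj
      by_cases h2 : j ∈ fs2
      · rw [Set.indicator_of_mem (by exact Finset.mem_inter.2 ⟨hj, h2⟩) w1]
      · rw [Set.indicator_of_notMem (by simp [h2]) w1, hvan j hj h2]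
    · intro j _; rfl

private lemma agl_vectorSpan_disjoint {ι : Type} {c : ι → F}
    (ha : AffineIndependent (ZMod p) c) (J K : Set ι) (hJK : J ∩ K = ∅) {v : F}
    (hvJ : v ∈ vectorSpan (ZMod p) (c '' J)) (hvK : v ∈ vectorSpan (ZMod p) (c '' K)) :
    v = 0 := by
  classical
  rw [Set.image_eq_range, mem_vectorSpan_iff_eq_weightedVSub,
    ← Finset.eq_weightedVSub_subset_iff_eq_weightedVSub_subtype] at hvJ hvK
  obtain ⟨fs1, hfs1, w1, hw1, hv1⟩ := hvJ
  obtain ⟨fs2, hfs2, w2, hw2, hv2⟩ := hvK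
  have hdisj : ∀ j ∈ fs1, j ∉ fs2 := by
    intro j h1 h2
    have : j ∈ J ∩ K := ⟨hfs1 h1, hfs2 h2⟩
    rw [hJK] at this
    exact this
  have hsum : ∑ j ∈ fs1 ∪ fs2,
      (Set.indicator (↑fs1) w1 - Set.indicator (↑fs2) w2) j = 0 := by
    simp only [Pi.sub_apply, Finset.sum_sub_distrib]
    rw [Finset.sum_indicator_subset w1 Finset.subset_union_left,
      Finset.sum_indicator_subset w2 Finset.subset_union_right, hw1, hw2, sub_zero]
  have hvsub : (fs1 ∪ fs2).weightedVSub c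
      (Set.indicator (↑fs1) w1 - Set.indicator (↑fs2) w2) = 0 := by
    rw [map_sub, ← Finset.weightedVSub_indicator_subset w1 c Finset.subset_union_left,
      ← Finset.weightedVSub_indicator_subset w2 c Finset.subset_union_right,
      ← hv1, ← hv2, sub_self]
  have hall := ha (fs1 ∪ fs2) _ hsum hvsub
  have hw1z : ∀ j ∈ fs1, w1 j = 0 := by
    intro j hj
    have h := hall j (Finset.mem_union_left _ hj)
    simpa [Set.indicator_of_mem (Finset.mem_coe.2 hj),
      Set.indicator_of_notMem (fun h2 => hdisj j hj (Finset.mem_coe.1 h2))] using h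
  rw [hv1, Finset.weightedVSub_eq_weightedVSubOfPoint_of_sum_eq_zero fs1 w1 c hw1 0,
    Finset.weightedVSubOfPoint_apply]
  exact Finset.sum_eq_zero fun j hj => by rw [hw1z j hj, zero_smul]

end AuxAGL

/-- A set of involutions of `AGL(1,q)` satisfies the intersection property
(is a C-group together with the subgroup it generates) if and only if the set of their fixed
points is affinely independent over the prime field `F_p`. -/
theorem agl1_c_group_iff_affinely_independent
    (p : ℕ) [Fact p.Prime] (hp : p ≠ 2)
    (F : Type) [Field F] [Fintype F] [CharP F p]
    (ι : Type) (α : ι → (F ≃ᵃ[F] F)) (hinj : Function.Injective α)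
    (hinv : ∀ i, (α i) ^ 2 = 1 ∧ α i ≠ 1)
    (c : ι → F) (hc : ∀ i, α i (c i) = c i)
    (hform : ∀ i x, α i x = -x + (c i + c i)) :
    (∀ J K : Set ι,
        Subgroup.closure (α '' J) ⊓ Subgroup.closure (α '' K) =
          Subgroup.closure (α '' (J ∩ K))) ↔
      AffineIndependent (ZMod p) c := by
  classical
  have hp2 : ¬ (p ∣ 2) := by
    intro h
    exact hp ((Nat.prime_dvd_prime_iff_eq Fact.out Nat.prime_two).1 h)
  have hk2 : (2 : ZMod p) ≠ 0 := by
    intro h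
    exact hp2 ((CharP.cast_eq_zero_iff (ZMod p) p 2).1 (by exact_mod_cast h))
  have hF2 : (2 : F) ≠ 0 := by
    intro h
    exact hp2 ((CharP.cast_eq_zero_iff F p 2).1 (by exact_mod_cast h))
  have hα0 : ∀ i, α i 0 = c i + c i := fun i => by rw [hform]; ring
  have hclosure := fun (J : Set ι) => agl_closure_eq hk2 α c hform J
  constructor
  · -- intersection property → affinely independent
    intro hIP
    intro s w hw hws i hi
    by_contra hwi
    -- c i is an affine combination of the other points
    have hsum_erase : ∑ j ∈ s.erase i, w j = -w i := by
      have h := Finset.add_sum_erase s w hi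
      rw [hw] at h
      linear_combination h
    have hlin : ∑ j ∈ s, w j • c j = 0 := by
      have h := Finset.weightedVSub_eq_weightedVSubOfPoint_of_sum_eq_zero s w c hw 0
      rw [h, Finset.weightedVSubOfPoint_apply] at hws
      simpa [vsub_eq_sub] using hws
    have hsum_u : ∑ j ∈ s.erase i, (-(w i)⁻¹ * w j) = 1 := by
      rw [← Finset.mul_sum, hsum_erase, neg_mul_neg, inv_mul_cancel₀ hwi]
    have hcomb : (s.erase i).affineCombination (ZMod p) c (fun j => -(w i)⁻¹ * w j) = c i := by
      rw [Finset.affineCombination_eq_linear_combination _ _ _ hsum_u]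
      have hlin_erase : ∑ j ∈ s.erase i, w j • c j = -(w i • c i) := by
        have h := Finset.add_sum_erase s (fun j => w j • c j) hi
        rw [hlin] at h
        linear_combination h
      calc ∑ j ∈ s.erase i, (-(w i)⁻¹ * w j) • c j
          = ∑ j ∈ s.erase i, (-(w i)⁻¹) • (w j • c j) := by
            apply Finset.sum_congr rfl
            intro j _
            rw [mul_smul]
        _ = (-(w i)⁻¹) • ∑ j ∈ s.erase i, w j • c j := by rw [Finset.smul_sum]
        _ = c i := by
            rw [hlin_erase, smul_neg, neg_smul, neg_neg, smul_smul, inv_mul_cancel₀ hwi,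
              one_smul]
    have hmemspan : c i ∈ affineSpan (ZMod p) (c '' (↑(s.erase i) : Set ι)) := by
      rw [Set.image_eq_range, mem_affineSpan_iff_eq_affineCombination,
        ← Finset.eq_affineCombination_subset_iff_eq_affineCombination_subtype]
      exact ⟨s.erase i, subset_rfl, fun j => -(w i)⁻¹ * w j, hsum_u, hcomb.symm⟩
    have hmem : α i ∈ Subgroup.closure (α '' (↑(s.erase i) : Set ι)) := by
      rw [hclosure, mem_aglH]
      right
      exact ⟨fun x => by rw [hform i x, hα0 i], c i, hmemspan, hα0 i⟩
    have hJi : (↑(s.erase i) : Set ι) ∩ {i} = ∅ := by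
      ext j
      simp only [Set.mem_inter_iff, Set.mem_singleton_iff, Set.mem_empty_iff_false, iff_false,
        not_and]
      intro hjJ hji
      subst hji
      exact (Finset.notMem_erase j s) (Finset.mem_coe.1 hjJ)
    have h2 := hIP (↑(s.erase i) : Set ι) {i}
    rw [hJi, Set.image_empty, Subgroup.closure_empty] at h2
    have h3 : α i ∈ (⊥ : Subgroup (F ≃ᵃ[F] F)) := by
      rw [← h2]
      exact Subgroup.mem_inf.2 ⟨hmem, Subgroup.subset_closure ⟨i, rfl, rfl⟩⟩
    exact (hinv i).2 (Subgroup.mem_bot.1 h3)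
  · -- affinely independent → intersection property
    intro ha J K
    rw [hclosure J, hclosure K, hclosure (J ∩ K)]
    apply le_antisymm
    · intro g hg
      obtain ⟨hgJ, hgK⟩ := Subgroup.mem_inf.1 hg
      rw [mem_aglH] at hgJ hgK
      rw [mem_aglH]
      have hmixed : ∀ (h1 : ∀ x : F, g x = x + g 0) (h2 : ∀ x : F, g x = -x + g 0), False := by
        intro h1 h2
        have h3 : (1 : F) + g 0 = -1 + g 0 := by rw [← h1 1, h2 1]
        exact hF2 (by linear_combination h3)
      rcases hgJ with ⟨hJ1, hJ2⟩ | ⟨hJ1, dJ, hdJ, hdJ2⟩ <;>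
        rcases hgK with ⟨hK1, hK2⟩ | ⟨hK1, dK, hdK, hdK2⟩
      · rcases Set.eq_empty_or_nonempty (J ∩ K) with he | ⟨i0, hi0J, hi0K⟩
        · left
          refine ⟨hJ1, ?_⟩
          have h0 : g 0 = 0 := agl_vectorSpan_disjoint ha J K he
            (by rw [← direction_affineSpan]; exact hJ2)
            (by rw [← direction_affineSpan]; exact hK2)
          rw [h0]
          exact Submodule.zero_mem _
        · left
          refine ⟨hJ1, ?_⟩
          have hmJ : g 0 +ᵥ c i0 ∈ affineSpan (ZMod p) (c '' J) :=
            AffineSubspace.vadd_mem_of_mem_direction hJ2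
              (mem_affineSpan _ (Set.mem_image_of_mem c hi0J))
          have hmK : g 0 +ᵥ c i0 ∈ affineSpan (ZMod p) (c '' K) :=
            AffineSubspace.vadd_mem_of_mem_direction hK2
              (mem_affineSpan _ (Set.mem_image_of_mem c hi0K))
          have hm := agl_span_inter ha J K hmJ hmK
          have h2 := AffineSubspace.vsub_mem_direction hm
            (mem_affineSpan _ (Set.mem_image_of_mem c (⟨hi0J, hi0K⟩ : i0 ∈ J ∩ K)))
          simpa [vadd_eq_add, vsub_eq_sub, add_sub_cancel_right] using h2
      · exact (hmixed hJ1 hK1).elim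
      · exact (hmixed hK1 hJ1).elim
      · right
        have hdd : dJ = dK := by
          have h2 : (2 : F) * dJ = (2 : F) * dK := by
            rw [two_mul, two_mul, ← hdJ2, ← hdK2]
          exact mul_left_cancel₀ hF2 h2
        exact ⟨hJ1, dJ, agl_span_inter ha J K hdJ (hdd ▸ hdK), hdJ2⟩
    · refine le_inf (aglH_mono ?_) (aglH_mono ?_)
      · exact affineSpan_mono _ (Set.image_mono Set.inter_subset_left)
      · exact affineSpan_mono _ (Set.image_mono Set.inter_subset_right)
end

section
/- Let q be an odd prime power, O a non-degenerate conic in PG(2,q), and G its stabilizer. If three involutions of G pairwise commute and are pairwise distinct, then their centers are not collinear, and the axis of each is the line joining the centers of the other two (i.e., their centers form a self-polar triangle with respect to O). -/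
open Projectivization

variable {F : Type} [Field F]

namespace SP

lemma f_rep_eq_zero_iff (f : (Fin 3 → F) →ₗ[F] F) (v : Fin 3 → F) (hv : v ≠ 0) :
    f ((Projectivization.mk F v hv).rep) = 0 ↔ f v = 0 := by
  obtain ⟨a, ha⟩ := (Projectivization.mk_eq_mk_iff' F _ _
    (Projectivization.rep_nonzero _) hv).1 (Projectivization.mk_rep (Projectivization.mk F v hv))
  have ha0 : a ≠ 0 := by
    rintro rfl
    exact Projectivization.rep_nonzero (Projectivization.mk F v hv) (by rw [← ha, zero_smul])
  rw [← ha, map_smul, smul_eq_mul, mul_eq_zero]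
  exact ⟨fun h => h.resolve_left ha0, Or.inr⟩

lemma eq_smul_id (T : (Fin 3 → F) →ₗ[F] (Fin 3 → F))
    (h : ∀ v : Fin 3 → F, v ≠ 0 → ∃ a : F, T v = a • v) :
    ∃ μ : F, ∀ v, T v = μ • v := by
  set v₀ : Fin 3 → F := Pi.single 0 1 with hv₀def
  have hv₀ : v₀ ≠ 0 := by
    intro h0
    have := congrFun h0 0
    simp [hv₀def] at this
  obtain ⟨μ, hμ⟩ := h v₀ hv₀
  refine ⟨μ, fun w => ?_⟩
  by_cases hw : w = 0
  · simp [hw]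
  by_cases hspan : ∃ c : F, w = c • v₀
  · obtain ⟨c, rfl⟩ := hspan
    rw [map_smul, hμ, smul_comm]
  · obtain ⟨a, ha⟩ := h w hw
    have hsum : v₀ + w ≠ 0 := by
      intro h0
      exact hspan ⟨-1, by rw [neg_one_smul, ← neg_eq_of_add_eq_zero_right h0]⟩
    obtain ⟨b, hb⟩ := h (v₀ + w) hsum
    rw [map_add, hμ, ha, smul_add] at hb
    have key : (μ - b) • v₀ = (b - a) • w := by
      rw [sub_smul, sub_smul]
      abel_nf
      linear_combination (norm := abel) hb
    by_cases hmb : μ = b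
    · rw [hmb, sub_self, zero_smul] at key
      have hba : b = a := by
        rcases smul_eq_zero.1 key.symm with h' | h'
        · exact sub_eq_zero.1 h'
        · exact absurd h' hw
      rw [ha, ← hba, ← hmb]
    · exfalso
      apply hspan
      have hmb' : (μ - b) ≠ 0 := sub_ne_zero.2 hmb
      have : v₀ = ((μ - b)⁻¹ * (b - a)) • w := by
        rw [mul_smul, ← key, inv_smul_smul₀ hmb']
      have hba : (b - a) ≠ 0 := by
        rintro h'
        rw [h', mul_zero, zero_smul] at this
        exact hv₀ this
      refine ⟨((μ - b)⁻¹ * (b - a))⁻¹, ?_⟩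
      rw [this, inv_smul_smul₀ (mul_ne_zero (inv_ne_zero hmb') hba)]

end SP

namespace SP

lemma center_fixed (φ : Equiv.Perm (Pt F)) (C : Pt F) (hC : IsCenterOf φ C)
    (T : (Fin 3 → F) →ₗ[F] (Fin 3 → F)) (hT : Function.Injective T)
    (hφ : ∀ x, φ x = Projectivization.map T hT x) : φ C = C := by
  have hc0 : C.rep ≠ 0 := C.rep_nonzero
  obtain ⟨i, hi⟩ : ∃ i, C.rep i ≠ 0 := by
    by_contra h; push_neg at h; exact hc0 (funext h)
  set c : Fin 3 → F := C.rep with hcdef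
  set w : Fin 3 → F := (φ C).rep with hwdef
  have key : ∀ j, c i * w j - c j * w i = 0 := by
    intro j
    by_cases hij : j = i
    · subst hij; ring
    · set f : (Fin 3 → F) →ₗ[F] F :=
        c i • LinearMap.proj j - c j • LinearMap.proj i with hfdef
      have hfapp : ∀ v : Fin 3 → F, f v = c i * v j - c j * v i := by
        intro v
        simp [hfdef, smul_eq_mul]
      have hf0 : f ≠ 0 := by
        intro h0
        have h1 : f (Pi.single j 1) = 0 := by rw [h0]; rfl
        rw [hfapp] at h1
        rw [Pi.single_eq_same, Pi.single_eq_of_ne (Ne.symm hij)] at h1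
        simp at h1
        exact hi h1
      have hCL : C ∈ {x : Pt F | f x.rep = 0} := by
        show f C.rep = 0
        rw [hfapp]; ring
      have h2 := (hC {x : Pt F | f x.rep = 0} ⟨f, hf0, rfl⟩ hCL C).2 hCL
      have h3 : f w = 0 := h2
      rw [hfapp] at h3
      exact h3
  have hwc : w = (w i * (c i)⁻¹) • c := by
    funext j
    have h4 : c i * w j = c j * w i := by linear_combination key j
    show w j = (w i * (c i)⁻¹) * c j
    field_simp
    linear_combination h4
  have : φ C = Projectivization.mk F w (φ C).rep_nonzero := (Projectivization.mk_rep _).symm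
  rw [this]
  conv_rhs => rw [← Projectivization.mk_rep C]
  rw [Projectivization.mk_eq_mk_iff']
  exact ⟨w i * (c i)⁻¹, hwc.symm⟩

end SP

namespace SP

lemma extract (h2 : (2:F) ≠ 0) (φ : Equiv.Perm (Pt F)) (C : Pt F)
    (g : (Fin 3 → F) ≃ₗ[F] (Fin 3 → F))
    (hg : ∀ x : Pt F, φ x = Projectivization.map
      (g : (Fin 3 → F) →ₗ[F] (Fin 3 → F)) g.injective x)
    (hsq : ∀ x, φ (φ x) = x) (hne : φ ≠ 1) (hcen : IsCenterOf φ C) :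
    ∃ T : (Fin 3 → F) →ₗ[F] (Fin 3 → F), ∃ hT : Function.Injective T,
      (∀ x, φ x = Projectivization.map T hT x) ∧
      (∀ v, T (T v) = v) ∧
      T C.rep = C.rep ∧
      (∀ v, T v = v → ∃ a : F, v = a • C.rep) := by
  set G : (Fin 3 → F) →ₗ[F] (Fin 3 → F) := (g : (Fin 3 → F) →ₗ[F] (Fin 3 → F)) with hGdef
  have hGinj : Function.Injective G := g.injective
  obtain ⟨μ, hμ0⟩ := eq_smul_id (G ∘ₗ G) (fun v hv => by
    have h1 : φ (φ (Projectivization.mk F v hv)) = Projectivization.mk F v hv := hsq _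
    rw [hg, hg, Projectivization.map_mk, Projectivization.map_mk] at h1
    obtain ⟨a, ha⟩ := (Projectivization.mk_eq_mk_iff' F _ _ _ hv).1 h1
    exact ⟨a, ha.symm⟩)
  have hμ : ∀ v, G (G v) = μ • v := fun v => hμ0 v
  have hfix : φ C = C := center_fixed φ C hcen G hGinj hg
  have hc0 : C.rep ≠ 0 := C.rep_nonzero
  obtain ⟨lam, hlam⟩ : ∃ a : F, a • C.rep = G C.rep := by
    have h1 : φ (Projectivization.mk F C.rep hc0) = Projectivization.mk F C.rep hc0 := by
      rw [Projectivization.mk_rep]; exact hfix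
    rw [hg, Projectivization.map_mk] at h1
    exact (Projectivization.mk_eq_mk_iff' F _ _ _ hc0).1 h1
  have hlam0 : lam ≠ 0 := by
    rintro rfl
    rw [zero_smul] at hlam
    exact hc0 (hGinj (by rw [← hlam, map_zero]))
  set T : (Fin 3 → F) →ₗ[F] (Fin 3 → F) := lam⁻¹ • G with hTdef
  have hTapp : ∀ v, T v = lam⁻¹ • G v := fun v => rfl
  have hT : Function.Injective T := by
    intro a b hab
    rw [hTapp, hTapp] at hab
    have := congrArg (fun z => lam • z) hab
    simp only [smul_smul, mul_inv_cancel₀ hlam0, one_smul] at this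
    exact hGinj this
  have hTc : T C.rep = C.rep := by
    rw [hTapp, ← hlam, smul_smul, inv_mul_cancel₀ hlam0, one_smul]
  have hTT : ∀ v, T (T v) = v := by
    have hgen : ∀ v, T (T v) = (lam⁻¹ * lam⁻¹ * μ) • v := by
      intro v
      rw [hTapp, hTapp, map_smul, hμ, smul_smul, smul_smul, mul_assoc]
    have hone : (lam⁻¹ * lam⁻¹ * μ) = 1 := by
      have h3 := hgen C.rep
      rw [hTc, hTc] at h3
      by_contra hcon
      have h4 : ((lam⁻¹ * lam⁻¹ * μ) - 1) • C.rep = 0 := by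
        rw [sub_smul, one_smul, ← h3, sub_self]
      rcases smul_eq_zero.1 h4 with h' | h'
      · exact hcon (by linear_combination h')
      · exact hc0 h'
    intro v; rw [hgen, hone, one_smul]
  have hφT : ∀ x, φ x = Projectivization.map T hT x := by
    intro x
    induction x using Projectivization.ind with
    | h v hv =>
      rw [hg, Projectivization.map_mk, Projectivization.map_mk]
      rw [Projectivization.mk_eq_mk_iff']
      exact ⟨lam, by rw [hTapp, smul_smul, mul_inv_cancel₀ hlam0, one_smul]⟩
  refine ⟨T, hT, hφT, hTT, hTc, ?_⟩
  intro u hu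
  by_contra hcon
  push_neg at hcon
  have hu0 : u ≠ 0 := by rintro rfl; exact hcon 0 (by rw [zero_smul])
  obtain ⟨x₀, hx₀⟩ : ∃ x, φ x ≠ x := by
    by_contra hall
    push_neg at hall
    exact hne (Equiv.ext hall)
  have hv0 : x₀.rep ≠ 0 := x₀.rep_nonzero
  set v : Fin 3 → F := x₀.rep with hvdef
  set w : Fin 3 → F := v - T v with hwdef
  have hTw : T w = -w := by
    rw [hwdef, map_sub, hTT, neg_sub]
  have hmkv : Projectivization.mk F v hv0 = x₀ := Projectivization.mk_rep x₀
  have hw0 : w ≠ 0 := by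
    intro h0
    apply hx₀
    have hTv : T v = v := by
      have := sub_eq_zero.1 h0
      rw [← this]
    rw [hφT, ← hmkv, Projectivization.map_mk, Projectivization.mk_eq_mk_iff']
    exact ⟨1, by rw [one_smul, hTv]⟩
  set c : Fin 3 → F := C.rep with hcdef2
  have hli : LinearIndependent F ![c, u, w] := by
    rw [Fintype.linearIndependent_iff]
    intro coef hcoef
    rw [Fin.sum_univ_three] at hcoef
    simp only [Matrix.cons_val_zero, Matrix.cons_val_one, Matrix.head_cons,
      Matrix.cons_val_two, Matrix.tail_cons] at hcoef
    have hcoef2 : coef 0 • c + coef 1 • u - coef 2 • w = 0 := by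
      have h5 := congrArg T hcoef
      rw [map_add, map_add, map_smul, map_smul, map_smul, hTc, hu, hTw, map_zero] at h5
      rw [← h5]
      simp only [smul_neg]
      abel
    have h20 : coef 2 = 0 := by
      have hsub : (2 : F) • (coef 2 • w) = 0 := by
        rw [two_smul]
        calc coef 2 • w + coef 2 • w
            = (coef 0 • c + coef 1 • u + coef 2 • w) -
              (coef 0 • c + coef 1 • u - coef 2 • w) := by abel
          _ = 0 := by rw [hcoef, hcoef2, sub_zero]
      rcases smul_eq_zero.1 hsub with h' | h'
      · exact absurd h' h2
      · rcases smul_eq_zero.1 h' with h'' | h''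
        · exact h''
        · exact absurd h'' hw0
    have hcoef' : coef 0 • c + coef 1 • u = 0 := by
      rw [h20, zero_smul, add_zero] at hcoef; exact hcoef
    have h10 : coef 1 = 0 := by
      by_contra hb
      have h6 : coef 1 • u = (-(coef 0)) • c := by
        rw [neg_smul, eq_neg_iff_add_eq_zero, add_comm]
        exact hcoef'
      have h7 : u = ((coef 1)⁻¹ * (-(coef 0))) • c := by
        calc u = (coef 1)⁻¹ • (coef 1 • u) := by
              rw [smul_smul, inv_mul_cancel₀ hb, one_smul]
          _ = (coef 1)⁻¹ • ((-(coef 0)) • c) := by rw [h6]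
          _ = ((coef 1)⁻¹ * (-(coef 0))) • c := by rw [smul_smul]
      exact hcon _ h7
    have h00 : coef 0 = 0 := by
      rw [h10, zero_smul, add_zero] at hcoef'
      rcases smul_eq_zero.1 hcoef' with h' | h'
      · exact h'
      · exact absurd h' hc0
    intro i
    fin_cases i <;> assumption
  set B : Module.Basis (Fin 3) F (Fin 3 → F) :=
    basisOfLinearIndependentOfCardEqFinrank hli
      (by simp [Module.finrank_fin_fun]) with hBdef
  have hB : ∀ i, B i = ![c, u, w] i := fun i => by
    rw [hBdef, coe_basisOfLinearIndependentOfCardEqFinrank]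
  have hB0 : B 0 = c := by rw [hB]; rfl
  have hB1 : B 1 = u := by rw [hB]; rfl
  have hB2 : B 2 = w := by rw [hB]; rfl
  set f : (Fin 3 → F) →ₗ[F] F := B.coord 1 - B.coord 2 with hfdef
  have hfB : ∀ i, f (B i) = (if i = (1:Fin 3) then (1:F) else 0) - (if i = (2:Fin 3) then 1 else 0) := by
    intro i
    simp [hfdef, Module.Basis.coord_apply, Module.Basis.repr_self, Finsupp.single_apply]
  have hfc : f c = 0 := by rw [← hB0, hfB]; simp
  have hfu : f u = 1 := by rw [← hB1, hfB]; simp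
  have hfw : f w = -1 := by rw [← hB2, hfB]; simp
  have hf0 : f ≠ 0 := fun h0 => one_ne_zero (α := F) (by rw [← hfu, h0]; rfl)
  have huw : u + w ≠ 0 := by
    intro h0
    have hwu : w = -u := (neg_eq_of_add_eq_zero_right h0).symm
    have : T w = w := by rw [hwu, map_neg, hu]
    rw [hTw] at this
    have h8 : (2:F) • w = 0 := by
      rw [two_smul]
      nth_rewrite 1 [← this]
      rw [neg_add_cancel]
    rcases smul_eq_zero.1 h8 with h' | h'
    · exact h2 h'
    · exact hw0 h'
  have hmemL : Projectivization.mk F (u+w) huw ∈ {x : Pt F | f x.rep = 0} := by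
    show f (Projectivization.mk F (u+w) huw).rep = 0
    rw [f_rep_eq_zero_iff, map_add, hfu, hfw]
    ring
  have hCL : C ∈ {x : Pt F | f x.rep = 0} := hfc
  have hφmem := (hcen _ ⟨f, hf0, rfl⟩ hCL (Projectivization.mk F (u+w) huw)).2 hmemL
  rw [hφT, Projectivization.map_mk] at hφmem
  have h9 : f (T (u+w)) = 0 := (f_rep_eq_zero_iff f _ _).1 hφmem
  rw [map_add, hu, hTw, map_add, hfu, map_neg, hfw] at h9
  exact h2 (by linear_combination h9)

end SP

namespace SP

lemma apply_mk (T : (Fin 3 → F) →ₗ[F] (Fin 3 → F)) (hT : Function.Injective T)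
    (φ : Equiv.Perm (Pt F)) (hφ : ∀ x, φ x = Projectivization.map T hT x)
    (v : Fin 3 → F) (hv : v ≠ 0) :
    φ (Projectivization.mk F v hv) =
      Projectivization.mk F (T v)
        (fun h => hv (hT (h.trans (map_zero T).symm))) := by
  rw [hφ, Projectivization.map_mk]

lemma perm_sq_id (T : (Fin 3 → F) →ₗ[F] (Fin 3 → F)) (hT : Function.Injective T)
    (hTT : ∀ v, T (T v) = v) (φ : Equiv.Perm (Pt F))
    (hφ : ∀ x, φ x = Projectivization.map T hT x) :
    ∀ z, φ (φ z) = z := by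
  intro z
  induction z using Projectivization.ind with
  | h v hv =>
    rw [apply_mk T hT φ hφ, apply_mk T hT φ hφ, Projectivization.mk_eq_mk_iff']
    exact ⟨1, by rw [one_smul, hTT]⟩

lemma comm_matrix (T S : (Fin 3 → F) →ₗ[F] (Fin 3 → F))
    (hT : Function.Injective T) (hS : Function.Injective S)
    (hTT : ∀ v, T (T v) = v) (hSS : ∀ v, S (S v) = v)
    (φ ψ : Equiv.Perm (Pt F))
    (hφ : ∀ x, φ x = Projectivization.map T hT x)
    (hψ : ∀ x, ψ x = Projectivization.map S hS x)
    (hcomm : ∀ x, φ (ψ x) = ψ (φ x)) :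
    ∀ v, T (S v) = S (T v) := by
  have hφ2 : ∀ z, φ (φ z) = z := perm_sq_id T hT hTT φ hφ
  have hψ2 : ∀ z, ψ (ψ z) = z := perm_sq_id S hS hSS ψ hψ
  have hid : ∀ x, φ (ψ (φ (ψ x))) = x := by
    intro x
    rw [← hcomm (ψ x), hψ2, hφ2]
  obtain ⟨μ, hμ0⟩ := eq_smul_id (T ∘ₗ S ∘ₗ T ∘ₗ S) (fun v hv => by
    have h1 := hid (Projectivization.mk F v hv)
    rw [apply_mk S hS ψ hψ, apply_mk T hT φ hφ, apply_mk S hS ψ hψ,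
      apply_mk T hT φ hφ] at h1
    obtain ⟨a, ha⟩ := (Projectivization.mk_eq_mk_iff' F _ _ _ hv).1 h1
    exact ⟨a, by show T (S (T (S v))) = a • v; rw [ha]⟩)
  have hμ : ∀ v, T (S (T (S v))) = μ • v := fun v => hμ0 v
  have heq : ∀ v, T (S v) = μ • S (T v) := by
    intro v
    have h1 := hμ (S (T v))
    rw [hSS, hTT] at h1
    exact h1
  have hμsq : μ * μ = 1 := by
    have key : ∀ v, S v = (μ * μ) • S v := by
      intro v
      have h1 := congrArg T (heq v)
      rw [hTT, map_smul, heq, hTT, smul_smul] at h1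
      exact h1
    have hv₀ : S (Pi.single 0 1) ≠ (0 : Fin 3 → F) := by
      intro h0
      have h1 : (Pi.single 0 1 : Fin 3 → F) = 0 := hS (by rw [h0, map_zero])
      have := congrFun h1 0
      simp at this
    have h2 := key (Pi.single 0 1)
    have h3 : ((μ * μ) - 1) • S (Pi.single 0 1) = 0 := by
      rw [sub_smul, one_smul, ← h2, sub_self]
    rcases smul_eq_zero.1 h3 with h' | h'
    · linear_combination h'
    · exact absurd h' hv₀
  have hμcube : μ ^ 3 = 1 := by
    have hcompeq : (T ∘ₗ S) = μ • (S ∘ₗ T) := by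
      apply LinearMap.ext
      intro v
      rw [LinearMap.comp_apply, LinearMap.smul_apply, LinearMap.comp_apply]
      exact heq v
    have hdetT : LinearMap.det T * LinearMap.det T = 1 := by
      have hTTc : T ∘ₗ T = LinearMap.id := LinearMap.ext hTT
      rw [← LinearMap.det_comp, hTTc, LinearMap.det_id]
    have hdetT0 : LinearMap.det T ≠ 0 := by
      intro h0; rw [h0, mul_zero] at hdetT; exact zero_ne_one hdetT
    have hdetS : LinearMap.det S * LinearMap.det S = 1 := by
      have hSSc : S ∘ₗ S = LinearMap.id := LinearMap.ext hSS
      rw [← LinearMap.det_comp, hSSc, LinearMap.det_id]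
    have hdetS0 : LinearMap.det S ≠ 0 := by
      intro h0; rw [h0, mul_zero] at hdetS; exact zero_ne_one hdetS
    have h4 : LinearMap.det (T ∘ₗ S) = μ ^ 3 * LinearMap.det (S ∘ₗ T) := by
      rw [hcompeq, LinearMap.det_smul]
      congr 2
      simp [Module.finrank_fin_fun]
    rw [LinearMap.det_comp, LinearMap.det_comp] at h4
    have h5 : LinearMap.det T * LinearMap.det S ≠ 0 := mul_ne_zero hdetT0 hdetS0
    have h7 : (μ ^ 3 - 1) * (LinearMap.det T * LinearMap.det S) = 0 := by
      linear_combination -h4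
    rcases mul_eq_zero.1 h7 with h' | h'
    · linear_combination h'
    · exact absurd h' h5
  have hμ1 : μ = 1 := by
    rw [← hμcube]
    linear_combination -μ * hμsq
  intro v
  rw [heq, hμ1, one_smul]

end SP

namespace SP

lemma eq_of_same_center (h2 : (2:F) ≠ 0)
    (T S : (Fin 3 → F) →ₗ[F] (Fin 3 → F))
    (hTT : ∀ v, T (T v) = v) (hSS : ∀ v, S (S v) = v)
    (hcomm : ∀ v, T (S v) = S (T v))
    (p q : Fin 3 → F) (hq0 : q ≠ 0)
    (hTp : T p = p) (hSq : S q = q)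
    (hTfix : ∀ v, T v = v → ∃ a : F, v = a • p)
    (hSfix : ∀ v, S v = v → ∃ a : F, v = a • q)
    (hspan : ∃ a : F, q = a • p) : ∀ v, T v = S v := by
  obtain ⟨a₀, ha₀⟩ := hspan
  have ha₀0 : a₀ ≠ 0 := by rintro rfl; rw [zero_smul] at ha₀; exact hq0 ha₀
  have hpq : p = a₀⁻¹ • q := by rw [ha₀, smul_smul, inv_mul_cancel₀ ha₀0, one_smul]
  have hSp : S p = p := by rw [hpq, map_smul, hSq]
  have hTq : T q = q := by rw [ha₀, map_smul, hTp]
  have hneg : ∀ x, T x = -x → S x = -x := by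
    intro x hx
    have hy : S (x + S x) = x + S x := by rw [map_add, hSS, add_comm]
    have hTy : T (x + S x) = -(x + S x) := by
      rw [map_add, hx, hcomm, hx, map_neg, neg_add]
    obtain ⟨b, hb⟩ := hSfix _ hy
    have hTy' : T (x + S x) = x + S x := by rw [hb, map_smul, hTq]
    have hzero : (2:F) • (x + S x) = 0 := by
      rw [two_smul]
      nth_rewrite 1 [← hTy']
      rw [hTy, neg_add_cancel]
    rcases smul_eq_zero.1 hzero with h' | h'
    · exact absurd h' h2
    · have : S x = -x := by
        rw [← neg_eq_of_add_eq_zero_right h']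
      exact this
  intro v
  have hplus : T (v + T v) = v + T v := by rw [map_add, hTT, add_comm]
  have hminus : T (v - T v) = -(v - T v) := by rw [map_sub, hTT, neg_sub]
  obtain ⟨a, ha⟩ := hTfix _ hplus
  have hSplus : S (v + T v) = v + T v := by rw [ha, map_smul, hSp]
  have hSminus : S (v - T v) = -(v - T v) := hneg _ hminus
  have key : (2:F) • T v = (2:F) • S v := by
    have h1 : S ((v + T v) + (v - T v)) = (v + T v) - (v - T v) := by
      rw [map_add, hSplus, hSminus]
      abel
    have h2eq : (v + T v) + (v - T v) = (2:F) • v := by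
      rw [two_smul]; abel
    have h3eq : (v + T v) - (v - T v) = (2:F) • T v := by
      rw [two_smul]; abel
    rw [h2eq, h3eq, map_smul] at h1
    rw [← h1]
  exact smul_right_injective (Fin 3 → F) h2 key

lemma neg_of_distinct (h2 : (2:F) ≠ 0)
    (T S : (Fin 3 → F) →ₗ[F] (Fin 3 → F))
    (hT : Function.Injective T) (hS : Function.Injective S)
    (hTT : ∀ v, T (T v) = v) (hSS : ∀ v, S (S v) = v)
    (hcomm : ∀ v, T (S v) = S (T v))
    (φ ψ : Equiv.Perm (Pt F))
    (hφ : ∀ x, φ x = Projectivization.map T hT x)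
    (hψ : ∀ x, ψ x = Projectivization.map S hS x)
    (hne : φ ≠ ψ)
    (p q : Fin 3 → F) (hp0 : p ≠ 0) (hq0 : q ≠ 0)
    (hTp : T p = p) (hSq : S q = q)
    (hTfix : ∀ v, T v = v → ∃ a : F, v = a • p)
    (hSfix : ∀ v, S v = v → ∃ a : F, v = a • q) :
    S p = -p := by
  obtain ⟨t, ht⟩ : ∃ a : F, S p = a • p := by
    apply hTfix
    rw [hcomm, hTp]
  have ht2 : (t * t) • p = p := by
    have := congrArg S ht
    rw [hSS, map_smul, ht, smul_smul] at this
    exact this.symm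
  have htsq : t * t = 1 := by
    have h3 : ((t * t) - 1) • p = 0 := by
      rw [sub_smul, one_smul, ht2, sub_self]
    rcases smul_eq_zero.1 h3 with h' | h'
    · linear_combination h'
    · exact absurd h' hp0
  rcases mul_self_eq_one_iff.1 htsq with h1 | h1
  · exfalso
    apply hne
    have hSp : S p = p := by rw [ht, h1, one_smul]
    obtain ⟨b, hb⟩ := hSfix p hSp
    have hb0 : b ≠ 0 := by rintro rfl; rw [zero_smul] at hb; exact hp0 hb
    have hspan : ∃ a : F, q = a • p := by
      refine ⟨b⁻¹, ?_⟩
      rw [hb, smul_smul, inv_mul_cancel₀ hb0, one_smul]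
    have heq := eq_of_same_center h2 T S hTT hSS hcomm p q hq0 hTp hSq hTfix hSfix hspan
    apply Equiv.ext
    intro x
    induction x using Projectivization.ind with
    | h v hv =>
      rw [apply_mk T hT φ hφ, apply_mk S hS ψ hψ, Projectivization.mk_eq_mk_iff']
      exact ⟨1, by rw [one_smul, heq]⟩
  · rw [ht, h1, neg_one_smul]

end SP

namespace SP

lemma li3 (h2 : (2:F) ≠ 0) (T S : (Fin 3 → F) →ₗ[F] (Fin 3 → F))
    (p q r : Fin 3 → F) (hp0 : p ≠ 0) (hq0 : q ≠ 0) (hr0 : r ≠ 0)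
    (hTp : T p = p) (hTq : T q = -q) (hTr : T r = -r)
    (hSq : S q = q) (hSr : S r = -r) :
    LinearIndependent F ![p, q, r] := by
  rw [Fintype.linearIndependent_iff]
  intro coef hcoef
  rw [Fin.sum_univ_three] at hcoef
  simp only [Matrix.cons_val_zero, Matrix.cons_val_one, Matrix.head_cons,
    Matrix.cons_val_two, Matrix.tail_cons] at hcoef
  have hcoefT : coef 0 • p - coef 1 • q - coef 2 • r = 0 := by
    have h5 := congrArg T hcoef
    rw [map_add, map_add, map_smul, map_smul, map_smul, hTp, hTq, hTr, map_zero] at h5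
    rw [← h5]
    simp only [smul_neg]
    abel
  have h00 : coef 0 = 0 := by
    have hsub : (2 : F) • (coef 0 • p) = 0 := by
      rw [two_smul]
      calc coef 0 • p + coef 0 • p
          = (coef 0 • p + coef 1 • q + coef 2 • r) +
            (coef 0 • p - coef 1 • q - coef 2 • r) := by abel
        _ = 0 := by rw [hcoef, hcoefT, add_zero]
    rcases smul_eq_zero.1 hsub with h' | h'
    · exact absurd h' h2
    · rcases smul_eq_zero.1 h' with h'' | h''
      · exact h''
      · exact absurd h'' hp0
  have hcoef' : coef 1 • q + coef 2 • r = 0 := by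
    rw [h00, zero_smul, zero_add] at hcoef; exact hcoef
  have hcoefS : coef 1 • q - coef 2 • r = 0 := by
    have h5 := congrArg S hcoef'
    rw [map_add, map_smul, map_smul, hSq, hSr, map_zero] at h5
    rw [← h5]
    simp only [smul_neg]
    abel
  have h10 : coef 1 = 0 := by
    have hsub : (2 : F) • (coef 1 • q) = 0 := by
      rw [two_smul]
      calc coef 1 • q + coef 1 • q
          = (coef 1 • q + coef 2 • r) + (coef 1 • q - coef 2 • r) := by abel
        _ = 0 := by rw [hcoef', hcoefS, add_zero]
    rcases smul_eq_zero.1 hsub with h' | h'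
    · exact absurd h' h2
    · rcases smul_eq_zero.1 h' with h'' | h''
      · exact h''
      · exact absurd h'' hq0
  have h20 : coef 2 = 0 := by
    rw [h10, zero_smul, zero_add] at hcoef'
    rcases smul_eq_zero.1 hcoef' with h' | h'
    · exact h'
    · exact absurd h' hr0
  intro i
  fin_cases i <;> assumption

lemma axis_fix (T : (Fin 3 → F) →ₗ[F] (Fin 3 → F)) (hT : Function.Injective T)
    (φ : Equiv.Perm (Pt F)) (hφT : ∀ x, φ x = Projectivization.map T hT x)
    (p q r : Fin 3 → F) (B : Module.Basis (Fin 3) F (Fin 3 → F))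
    (hB0 : B 0 = p) (hB1 : B 1 = q) (hB2 : B 2 = r)
    (hTq : T q = -q) (hTr : T r = -r)
    (f : (Fin 3 → F) →ₗ[F] F) (hf0 : f ≠ 0) (hfq : f q = 0) (hfr : f r = 0)
    (x : Pt F) (hx : f x.rep = 0) : φ x = x := by
  have hfp : f p ≠ 0 := by
    intro h0
    apply hf0
    refine B.ext fun i => ?_
    fin_cases i
    · show f (B 0) = (0 : (Fin 3 → F) →ₗ[F] F) (B 0)
      rw [hB0, h0, LinearMap.zero_apply]
    · show f (B 1) = (0 : (Fin 3 → F) →ₗ[F] F) (B 1)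
      rw [hB1, hfq, LinearMap.zero_apply]
    · show f (B 2) = (0 : (Fin 3 → F) →ₗ[F] F) (B 2)
      rw [hB2, hfr, LinearMap.zero_apply]
  have hrepr := B.sum_repr x.rep
  rw [Fin.sum_univ_three, hB0, hB1, hB2] at hrepr
  have ha : B.repr x.rep 0 = 0 := by
    have h5 : B.repr x.rep 0 * f p = 0 := by
      have h6 := congrArg f hrepr
      rw [map_add, map_add, map_smul, map_smul, map_smul, hfq, hfr, hx] at h6
      simpa [smul_eq_mul] using h6
    exact (mul_eq_zero.1 h5).resolve_right hfp
  have hveq : x.rep = B.repr x.rep 1 • q + B.repr x.rep 2 • r := by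
    conv_lhs => rw [← hrepr]
    rw [ha, zero_smul, zero_add]
  have hTx : T x.rep = -x.rep := by
    rw [hveq, map_add, map_smul, map_smul, hTq, hTr]
    simp only [smul_neg]
    abel
  rw [hφT, ← Projectivization.mk_rep x, Projectivization.map_mk,
    Projectivization.mk_eq_mk_iff']
  exact ⟨-1, by rw [hTx, neg_one_smul]⟩

end SP

/-- Three pairwise distinct, pairwise commuting involutions of the stabilizer
of a non-degenerate conic have non-collinear centers, and the axis of each (its set of fixed
points contains the line) is the line joining the centers of the other two: the centers form a
self-polar triangle. -/
theorem commuting_involutions_self_polar_triangle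
    (F : Type) [Field F] [Fintype F] (hodd : Odd (Fintype.card F))
    (Qf : QuadraticForm F (Fin 3 → F))
    (hQf : ∀ v : Fin 3 → F, (∀ w, QuadraticMap.polar Qf v w = 0) → v = 0)
    (O : Set (Pt F)) (hO : O = {x : Pt F | Qf x.rep = 0})
    (αP αQ αR : Equiv.Perm (Pt F)) (P Q R : Pt F)
    (hP : IsInvolWithCenter O αP P) (hQ : IsInvolWithCenter O αQ Q) (hR : IsInvolWithCenter O αR R)
    (hPQ : αP ≠ αQ) (hPR : αP ≠ αR) (hQR : αQ ≠ αR)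
    (cPQ : Commute αP αQ) (cPR : Commute αP αR) (cQR : Commute αQ αR) :
    (¬ ∃ l : Set (Pt F), IsLine l ∧ P ∈ l ∧ Q ∈ l ∧ R ∈ l) ∧
      (∀ l : Set (Pt F), IsLine l → Q ∈ l → R ∈ l → ∀ x ∈ l, αP x = x) ∧
      (∀ l : Set (Pt F), IsLine l → P ∈ l → R ∈ l → ∀ x ∈ l, αQ x = x) ∧
      (∀ l : Set (Pt F), IsLine l → P ∈ l → Q ∈ l → ∀ x ∈ l, αR x = x) := by
  -- characteristic is not 2
  have h2 : (2:F) ≠ 0 := by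
    intro h20
    have hd : ringChar F ∣ 2 := ringChar.dvd (by exact_mod_cast h20)
    have hr2 : ringChar F = 2 := by
      rcases (Nat.dvd_prime Nat.prime_two).1 hd with h | h
      · exact absurd h CharP.ringChar_ne_one
      · exact h
    have hmod := FiniteField.even_card_iff_char_two.1 hr2
    rw [Nat.odd_iff] at hodd
    omega
  -- unpack the involutions
  obtain ⟨hmemP, hsqP, hneP, hcenP⟩ := hP
  obtain ⟨hmemQ, hsqQ, hneQ, hcenQ⟩ := hQ
  obtain ⟨hmemR, hsqR, hneR, hcenR⟩ := hR
  obtain ⟨gP, hgP⟩ : IsProjy αP := hmemP.1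
  obtain ⟨gQ, hgQ⟩ : IsProjy αQ := hmemQ.1
  obtain ⟨gR, hgR⟩ : IsProjy αR := hmemR.1
  rw [sq] at hsqP hsqQ hsqR
  have hsqP' : ∀ x, αP (αP x) = x := fun x => by
    simpa [Equiv.Perm.mul_apply] using Equiv.ext_iff.1 hsqP x
  have hsqQ' : ∀ x, αQ (αQ x) = x := fun x => by
    simpa [Equiv.Perm.mul_apply] using Equiv.ext_iff.1 hsqQ x
  have hsqR' : ∀ x, αR (αR x) = x := fun x => by
    simpa [Equiv.Perm.mul_apply] using Equiv.ext_iff.1 hsqR x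
  have hcPQ : ∀ x, αP (αQ x) = αQ (αP x) := fun x => by
    simpa [Equiv.Perm.mul_apply] using
      Equiv.ext_iff.1 (cPQ : αP * αQ = αQ * αP) x
  have hcPR : ∀ x, αP (αR x) = αR (αP x) := fun x => by
    simpa [Equiv.Perm.mul_apply] using
      Equiv.ext_iff.1 (cPR : αP * αR = αR * αP) x
  have hcQR : ∀ x, αQ (αR x) = αR (αQ x) := fun x => by
    simpa [Equiv.Perm.mul_apply] using
      Equiv.ext_iff.1 (cQR : αQ * αR = αR * αQ) x
  obtain ⟨T, hT, hφT, hTT, hTp, hTfix⟩ := SP.extract h2 αP P gP hgP hsqP' hneP hcenP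
  obtain ⟨S, hS, hψS, hSS, hSq, hSfix⟩ := SP.extract h2 αQ Q gQ hgQ hsqQ' hneQ hcenQ
  obtain ⟨K, hK, hχK, hKK, hKr, hKfix⟩ := SP.extract h2 αR R gR hgR hsqR' hneR hcenR
  have hTS : ∀ v, T (S v) = S (T v) :=
    SP.comm_matrix T S hT hS hTT hSS αP αQ hφT hψS hcPQ
  have hTK : ∀ v, T (K v) = K (T v) :=
    SP.comm_matrix T K hT hK hTT hKK αP αR hφT hχK hcPR
  have hSK : ∀ v, S (K v) = K (S v) :=
    SP.comm_matrix S K hS hK hSS hKK αQ αR hψS hχK hcQR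
  have hp0 : P.rep ≠ 0 := P.rep_nonzero
  have hq0 : Q.rep ≠ 0 := Q.rep_nonzero
  have hr0 : R.rep ≠ 0 := R.rep_nonzero
  have hSp : S P.rep = -P.rep :=
    SP.neg_of_distinct h2 T S hT hS hTT hSS hTS αP αQ hφT hψS hPQ
      P.rep Q.rep hp0 hq0 hTp hSq hTfix hSfix
  have hKp : K P.rep = -P.rep :=
    SP.neg_of_distinct h2 T K hT hK hTT hKK hTK αP αR hφT hχK hPR
      P.rep R.rep hp0 hr0 hTp hKr hTfix hKfix
  have hTq : T Q.rep = -Q.rep :=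
    SP.neg_of_distinct h2 S T hS hT hSS hTT (fun v => (hTS v).symm) αQ αP hψS hφT
      hPQ.symm Q.rep P.rep hq0 hp0 hSq hTp hSfix hTfix
  have hKq : K Q.rep = -Q.rep :=
    SP.neg_of_distinct h2 S K hS hK hSS hKK hSK αQ αR hψS hχK hQR
      Q.rep R.rep hq0 hr0 hSq hKr hSfix hKfix
  have hTr : T R.rep = -R.rep :=
    SP.neg_of_distinct h2 K T hK hT hKK hTT (fun v => (hTK v).symm) αR αP hχK hφT
      hPR.symm R.rep P.rep hr0 hp0 hKr hTp hKfix hTfix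
  have hSr : S R.rep = -R.rep :=
    SP.neg_of_distinct h2 K S hK hS hKK hSS (fun v => (hSK v).symm) αR αQ hχK hψS
      hQR.symm R.rep Q.rep hr0 hq0 hKr hSq hKfix hSfix
  -- three bases
  have hliP : LinearIndependent F ![P.rep, Q.rep, R.rep] :=
    SP.li3 h2 T S P.rep Q.rep R.rep hp0 hq0 hr0 hTp hTq hTr hSq hSr
  have hliQ : LinearIndependent F ![Q.rep, P.rep, R.rep] :=
    SP.li3 h2 S T Q.rep P.rep R.rep hq0 hp0 hr0 hSq hSp hSr hTp hTr
  have hliR : LinearIndependent F ![R.rep, P.rep, Q.rep] :=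
    SP.li3 h2 K T R.rep P.rep Q.rep hr0 hp0 hq0 hKr hKp hKq hTp hTq
  have hcard : Fintype.card (Fin 3) = Module.finrank F (Fin 3 → F) := by
    simp [Module.finrank_fin_fun]
  set BP : Module.Basis (Fin 3) F (Fin 3 → F) :=
    basisOfLinearIndependentOfCardEqFinrank hliP hcard with hBPdef
  set BQ : Module.Basis (Fin 3) F (Fin 3 → F) :=
    basisOfLinearIndependentOfCardEqFinrank hliQ hcard with hBQdef
  set BR : Module.Basis (Fin 3) F (Fin 3 → F) :=
    basisOfLinearIndependentOfCardEqFinrank hliR hcard with hBRdef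
  have hBP0 : BP 0 = P.rep := by
    rw [hBPdef, coe_basisOfLinearIndependentOfCardEqFinrank]; rfl
  have hBP1 : BP 1 = Q.rep := by
    rw [hBPdef, coe_basisOfLinearIndependentOfCardEqFinrank]; rfl
  have hBP2 : BP 2 = R.rep := by
    rw [hBPdef, coe_basisOfLinearIndependentOfCardEqFinrank]; rfl
  have hBQ0 : BQ 0 = Q.rep := by
    rw [hBQdef, coe_basisOfLinearIndependentOfCardEqFinrank]; rfl
  have hBQ1 : BQ 1 = P.rep := by
    rw [hBQdef, coe_basisOfLinearIndependentOfCardEqFinrank]; rfl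
  have hBQ2 : BQ 2 = R.rep := by
    rw [hBQdef, coe_basisOfLinearIndependentOfCardEqFinrank]; rfl
  have hBR0 : BR 0 = R.rep := by
    rw [hBRdef, coe_basisOfLinearIndependentOfCardEqFinrank]; rfl
  have hBR1 : BR 1 = P.rep := by
    rw [hBRdef, coe_basisOfLinearIndependentOfCardEqFinrank]; rfl
  have hBR2 : BR 2 = Q.rep := by
    rw [hBRdef, coe_basisOfLinearIndependentOfCardEqFinrank]; rfl
  refine ⟨?_, ?_, ?_, ?_⟩
  · -- centers not collinear
    rintro ⟨l, ⟨f, hf0, rfl⟩, hPl, hQl, hRl⟩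
    apply hf0
    refine BP.ext fun i => ?_
    have hfP : f P.rep = 0 := hPl
    have hfQ : f Q.rep = 0 := hQl
    have hfR : f R.rep = 0 := hRl
    fin_cases i
    · show f (BP 0) = (0 : (Fin 3 → F) →ₗ[F] F) (BP 0)
      rw [hBP0, hfP, LinearMap.zero_apply]
    · show f (BP 1) = (0 : (Fin 3 → F) →ₗ[F] F) (BP 1)
      rw [hBP1, hfQ, LinearMap.zero_apply]
    · show f (BP 2) = (0 : (Fin 3 → F) →ₗ[F] F) (BP 2)
      rw [hBP2, hfR, LinearMap.zero_apply]
  · -- axis of αP is the line QR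
    rintro l ⟨f, hf0, rfl⟩ hQl hRl x hx
    exact SP.axis_fix T hT αP hφT P.rep Q.rep R.rep BP hBP0 hBP1 hBP2 hTq hTr
      f hf0 hQl hRl x hx
  · -- axis of αQ is the line PR
    rintro l ⟨f, hf0, rfl⟩ hPl hRl x hx
    exact SP.axis_fix S hS αQ hψS Q.rep P.rep R.rep BQ hBQ0 hBQ1 hBQ2 hSp hSr
      f hf0 hPl hRl x hx
  · -- axis of αR is the line PQ
    rintro l ⟨f, hf0, rfl⟩ hPl hQl x hx
    exact SP.axis_fix K hK αR hχK R.rep P.rep Q.rep BR hBR0 hBR1 hBR2 hKp hKq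
      f hf0 hPl hQl x hx
end
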